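/- arXiv:1209.4984 — 7 statements merged into one kernel-verified Lean document; each statement's English description precedes it below -/
import Mathlib

section
/- Let M be a nonsingular n×n integer matrix with m = |det M|, and let a ∈ ℤⁿ. Then the order of the class of a in the group ℤⁿ/Mℤⁿ equals m / gcd(m, g), where g is the greatest common divisor of the n coordinates of the integer vector adj(M)·a (adj(M) being the adjugate matrix of M, so that m·M⁻¹·a = ±adj(M)·a and both vectors have the same coordinate gcd). -/
/-- Let `M` be a nonsingular `n × n` integer matrix with `m = |det M|`,
and let `a ∈ ℤⁿ`.  Then the order of the class of `a` in `ℤⁿ/Mℤⁿ` equals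
`m / gcd(m, g)`, where `g` is the gcd of the `n` coordinates of `adj(M)·a`. -/
theorem stmt_5 (n : ℕ) (M : Matrix (Fin n) (Fin n) ℤ) (hM : M.det ≠ 0) (a : Fin n → ℤ) :
    addOrderOf
        (Submodule.Quotient.mk a : (Fin n → ℤ) ⧸ LinearMap.range M.mulVecLin) =
      M.det.natAbs /
        Nat.gcd M.det.natAbs
          (Finset.univ.gcd fun i : Fin n => ((M.adjugate.mulVec a) i).natAbs) := by
  set m := M.det.natAbs with hm
  set g := Finset.univ.gcd fun i : Fin n => ((M.adjugate.mulVec a) i).natAbs with hg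
  set d := m / Nat.gcd m g with hd
  have hm0 : 0 < m := Int.natAbs_pos.mpr hM
  have hk : 0 < Nat.gcd m g := Nat.gcd_pos_of_pos_left _ hm0
  have hgcd_dvd : Nat.gcd m g ∣ m := Nat.gcd_dvd_left _ _
  -- membership characterization
  have mem_iff : ∀ t : ℕ, ((t : ℤ) • a) ∈ LinearMap.range M.mulVecLin ↔
      ∀ i, M.det ∣ (t : ℤ) * (M.adjugate.mulVec a) i := by
    intro t
    constructor
    · rintro ⟨y, hy⟩
      intro i
      have h1 : M.adjugate.mulVec (M.mulVec y) = M.det • y := by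
        rw [Matrix.mulVec_mulVec, Matrix.adjugate_mul, Matrix.smul_mulVec,
          Matrix.one_mulVec]
      rw [Matrix.mulVecLin_apply] at hy
      rw [hy] at h1
      have h2 : M.adjugate.mulVec ((t : ℤ) • a) = (t : ℤ) • M.adjugate.mulVec a := by
        rw [Matrix.mulVec_smul]
      rw [h2] at h1
      exact ⟨y i, by simpa using congrFun h1 i⟩
    · intro h
      refine ⟨fun i => ((t : ℤ) * (M.adjugate.mulVec a) i) / M.det, ?_⟩
      rw [Matrix.mulVecLin_apply]
      have hy : (fun i => ((t : ℤ) * (M.adjugate.mulVec a) i) / M.det) =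
          fun i => ((t : ℤ) • M.adjugate.mulVec a) i / M.det := by
        funext i; simp
      rw [hy]
      have key : M.det • M.mulVec (fun i => ((t : ℤ) • M.adjugate.mulVec a) i / M.det)
          = M.det • ((t : ℤ) • a) := by
        have h1 : (M.det • fun i => ((t : ℤ) • M.adjugate.mulVec a) i / M.det)
            = (t : ℤ) • M.adjugate.mulVec a := by
          funext i
          simp only [Pi.smul_apply, smul_eq_mul]
          exact Int.mul_ediv_cancel' (by simpa using h i)
        rw [← Matrix.mulVec_smul, h1, Matrix.mulVec_smul, Matrix.mulVec_mulVec,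
          Matrix.mul_adjugate, Matrix.smul_mulVec, Matrix.one_mulVec, smul_comm]
      funext i
      have := congrFun key i
      simp only [Pi.smul_apply, smul_eq_mul] at this
      exact mul_left_cancel₀ hM this
  -- natAbs version
  have mem_iff2 : ∀ t : ℕ, ((t : ℤ) • a) ∈ LinearMap.range M.mulVecLin ↔ m ∣ t * g := by
    intro t
    rw [mem_iff t]
    have : ∀ i, (M.det ∣ (t : ℤ) * (M.adjugate.mulVec a) i) ↔
        m ∣ t * ((M.adjugate.mulVec a) i).natAbs := by
      intro i
      rw [← Int.natAbs_dvd_natAbs, Int.natAbs_mul, Int.natAbs_natCast, hm]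
    simp_rw [this]
    have hgcd : (Finset.univ.gcd fun i : Fin n => t * ((M.adjugate.mulVec a) i).natAbs)
        = t * g := by
      rw [hg, Finset.gcd_mul_left]
      simp
    constructor
    · intro h
      rw [← hgcd]
      exact Finset.dvd_gcd fun i _ => h i
    · intro h i
      exact h.trans (by rw [← hgcd]; exact Finset.gcd_dvd (Finset.mem_univ i))
  -- divisibility characterization
  have div_iff : ∀ t : ℕ, m ∣ t * g ↔ d ∣ t := by
    intro t
    set k := Nat.gcd m g with hkdef
    have hmk : m = k * d := (Nat.mul_div_cancel' hgcd_dvd).symm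
    obtain ⟨g', hgk⟩ : ∃ g', g = k * g' := ⟨g / k, (Nat.mul_div_cancel' (Nat.gcd_dvd_right m g)).symm⟩
    have hg' : g / k = g' := by rw [hgk, Nat.mul_div_cancel_left _ hk]
    have hco : Nat.Coprime d g' := by
      have := Nat.coprime_div_gcd_div_gcd (m := m) (n := g) hk
      rwa [hg'] at this
    constructor
    · intro h
      rw [hmk] at h
      have h2 : k * d ∣ k * (t * g') := by
        calc k * d ∣ t * g := h
        _ = k * (t * g') := by rw [hgk]; ring
      have h3 : d ∣ t * g' := (mul_dvd_mul_iff_left hk.ne').mp h2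
      exact hco.dvd_of_dvd_mul_right h3
    · intro h
      rw [hmk]
      calc k * d ∣ k * (t * g') :=
        mul_dvd_mul_left k (dvd_mul_of_dvd_left h _)
      _ = t * g := by rw [hgk]; ring
  -- smul on quotient
  have key : ∀ t : ℕ,
      t • (Submodule.Quotient.mk a : (Fin n → ℤ) ⧸ LinearMap.range M.mulVecLin) = 0
        ↔ d ∣ t := by
    intro t
    rw [← Nat.cast_smul_eq_nsmul ℤ, ← Submodule.Quotient.mk_smul,
      Submodule.Quotient.mk_eq_zero, mem_iff2, div_iff]
  have hd0 : 0 < d := Nat.div_pos (Nat.le_of_dvd hm0 hgcd_dvd) hk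
  have h1 : addOrderOf (Submodule.Quotient.mk a :
      (Fin n → ℤ) ⧸ LinearMap.range M.mulVecLin) ∣ d :=
    addOrderOf_dvd_of_nsmul_eq_zero ((key d).mpr dvd_rfl)
  have h2 : d ∣ addOrderOf (Submodule.Quotient.mk a :
      (Fin n → ℤ) ⧸ LinearMap.range M.mulVecLin) :=
    (key _).mp (addOrderOf_nsmul_eq_zero _)
  exact Nat.dvd_antisymm h1 h2
end

section
/- Let M be a nonsingular n×n integer matrix (n ≥ 2) whose (n−1)-th determinantal divisor d_{n−1}(M) equals 1 (equivalently, the gcd of the entries of the adjugate of M is 1), and let A ⊆ ℤⁿ/Mℤⁿ be a finite set. Then the multidimensional circulant digraph G(M;A) is a circulant: with m = |det M|, there exist a set B ⊆ ℤ/mℤ and a bijection e : ℤⁿ/Mℤⁿ → ℤ/mℤ such that for all u, v, v − u ∈ A if and only if e(v) − e(u) ∈ B. -/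
/-- The `k`-th determinantal divisor of an `n × n` integer matrix `M`: the gcd of the
(absolute values of the) determinants of all `k × k` submatrices of `M`. -/
noncomputable def detDivisor (n : ℕ) (M : Matrix (Fin n) (Fin n) ℤ) (k : ℕ) : ℕ :=
  Finset.univ.gcd fun p : (Fin k ↪ Fin n) × (Fin k ↪ Fin n) =>
    ((M.submatrix p.1 p.2).det).natAbs

section Aux

open Matrix

/-- Every embedding `Fin n ↪ Fin (n+1)` factors as a permutation followed by `succAbove`. -/
lemma emb_factor {n : ℕ} (p : Fin n ↪ Fin (n + 1)) :
    ∃ (j : Fin (n + 1)) (σ : Equiv.Perm (Fin n)), ∀ k, p k = j.succAbove (σ k) := by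
  obtain ⟨j, hj⟩ : ∃ j, j ∉ Set.range ⇑p := by
    by_contra h
    push_neg at h
    have hs : Function.Surjective ⇑p := fun y => h y
    simpa using Fintype.card_le_of_surjective _ hs
  have hr : Set.range ⇑p = Set.range j.succAbove := by
    apply Set.eq_of_subset_of_ncard_le
    · rw [Fin.range_succAbove]
      intro x hx
      simp only [Set.mem_compl_iff, Set.mem_singleton_iff]
      rintro rfl; exact hj hx
    · have key : ∀ f : Fin n → Fin (n + 1), Function.Injective f →
          (Set.range f).ncard = n := by
        intro f hf
        rw [← Nat.card_coe_set_eq, Nat.card_range_of_injective hf, Nat.card_eq_fintype_card,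
          Fintype.card_fin]
      rw [key _ p.injective, key _ (Fin.succAbove_right_injective (p := j))]
    · exact Set.toFinite _
  let e1 : Fin n ≃ Set.range ⇑p := Equiv.ofInjective _ p.injective
  let e2 : Fin n ≃ Set.range j.succAbove :=
    Equiv.ofInjective _ (Fin.succAbove_right_injective (p := j))
  refine ⟨j, (e1.trans (Equiv.setCongr hr)).trans e2.symm, fun k => ?_⟩
  have h2 : e2 (((e1.trans (Equiv.setCongr hr)).trans e2.symm) k)
      = (Equiv.setCongr hr) (e1 k) := by simp
  calc p k = ((Equiv.setCongr hr) (e1 k) : Fin (n + 1)) := rfl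
    _ = (e2 (((e1.trans (Equiv.setCongr hr)).trans e2.symm) k) : Fin (n + 1)) := by rw [h2]
    _ = j.succAbove (((e1.trans (Equiv.setCongr hr)).trans e2.symm) k) := rfl

/-- Any `n × n` minor of an `(n+1) × (n+1)` matrix equals, in absolute value, an entry of
the adjugate. -/
lemma minor_eq_adj {n : ℕ} (M : Matrix (Fin (n + 1)) (Fin (n + 1)) ℤ)
    (p1 p2 : Fin n ↪ Fin (n + 1)) :
    ∃ i j, ((M.submatrix p1 p2).det).natAbs = (M.adjugate i j).natAbs := by
  obtain ⟨j1, σ1, h1⟩ := emb_factor p1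
  obtain ⟨j2, σ2, h2⟩ := emb_factor p2
  refine ⟨j2, j1, ?_⟩
  have hsub : M.submatrix ⇑p1 ⇑p2
      = ((M.submatrix j1.succAbove j2.succAbove).submatrix id ⇑σ2).submatrix ⇑σ1 id := by
    ext a b; simp [h1, h2]
  have hdet1 : (((M.submatrix j1.succAbove j2.succAbove).submatrix id ⇑σ2).submatrix ⇑σ1 id).det
      = (Equiv.Perm.sign σ1 : ℤ) *
        ((M.submatrix j1.succAbove j2.succAbove).submatrix id ⇑σ2).det :=
    Matrix.det_permute σ1 _
  have hdet2 : ((M.submatrix j1.succAbove j2.succAbove).submatrix id ⇑σ2).det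
      = (Equiv.Perm.sign σ2 : ℤ) * (M.submatrix j1.succAbove j2.succAbove).det :=
    Matrix.det_permute' σ2 _
  rw [hsub, hdet1, hdet2, Matrix.adjugate_fin_succ_eq_det_submatrix]
  rcases Int.units_eq_one_or (Equiv.Perm.sign σ1) with hs1 | hs1 <;>
    rcases Int.units_eq_one_or (Equiv.Perm.sign σ2) with hs2 | hs2 <;>
      simp [hs1, hs2, Int.natAbs_mul, Int.natAbs_pow]

/-- If the `(n-1)`-th determinantal divisor is 1, the gcd of the adjugate entries is 1. -/
lemma gcd_adj_eq_one {n : ℕ} (hn : 2 ≤ n) (M : Matrix (Fin n) (Fin n) ℤ)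
    (hd : detDivisor n M (n - 1) = 1) :
    Finset.univ.gcd (fun p : Fin n × Fin n => (M.adjugate p.1 p.2).natAbs) = 1 := by
  obtain ⟨n', rfl⟩ : ∃ n', n = n' + 1 := ⟨n - 1, by omega⟩
  have h1 : (n' + 1) - 1 = n' := rfl
  rw [h1] at hd
  have hdvd : Finset.univ.gcd
      (fun p : Fin (n' + 1) × Fin (n' + 1) => (M.adjugate p.1 p.2).natAbs)
      ∣ detDivisor (n' + 1) M n' := by
    unfold detDivisor
    apply Finset.dvd_gcd
    intro p _
    obtain ⟨i, j, hij⟩ := minor_eq_adj M p.1 p.2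
    rw [hij]
    exact Finset.gcd_dvd (Finset.mem_univ (i, j))
  rw [hd] at hdvd
  exact Nat.dvd_one.mp hdvd


/-- Injectivity of `mulVecLin` for a matrix with nonzero determinant. -/
lemma mulVecLin_inj {n : ℕ} (M : Matrix (Fin n) (Fin n) ℤ) (hM : M.det ≠ 0) :
    Function.Injective ⇑M.mulVecLin := by
  rw [← LinearMap.ker_eq_bot]
  rw [Matrix.ker_mulVecLin_eq_bot_iff]
  intro v hv
  have h := congrArg (fun w => M.adjugate *ᵥ w) hv
  simp only [Matrix.mulVec_mulVec, Matrix.adjugate_mul, Matrix.mulVec_zero] at h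
  rw [Matrix.smul_mulVec, Matrix.one_mulVec, smul_eq_zero] at h
  exact h.resolve_left hM

/-- The quotient `ℤⁿ/Mℤⁿ` decomposes as a product of cyclic groups whose orders
multiply to `|det M|`. -/
lemma exists_equiv_pi {n : ℕ} (M : Matrix (Fin n) (Fin n) ℤ) (hM : M.det ≠ 0) :
    ∃ (d : Fin n → ℕ)
      (_ : ((Fin n → ℤ) ⧸ LinearMap.range M.mulVecLin) ≃+ ∀ i, ZMod (d i)),
      (∀ i, d i ≠ 0) ∧ ∏ i, d i = M.det.natAbs := by
  classical
  have hinj := mulVecLin_inj M hM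
  set N := LinearMap.range M.mulVecLin with hNdef
  obtain ⟨k, snf⟩ := N.smithNormalForm (Pi.basisFun ℤ (Fin n))
  -- k = n
  let e0 : (Fin n → ℤ) ≃ₗ[ℤ] N := LinearEquiv.ofInjective _ hinj
  have hkn : k = n := by
    have h1 : Module.finrank ℤ N = k := by
      rw [Module.finrank_eq_card_basis snf.bN, Fintype.card_fin]
    have h2 : Module.finrank ℤ N = n := by
      rw [Module.finrank_eq_card_basis ((Pi.basisFun ℤ (Fin n)).map e0), Fintype.card_fin]
    omega
  let fe : Fin k ≃ Fin n := Equiv.ofBijective ⇑snf.f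
    ((Fintype.bijective_iff_injective_and_card ⇑snf.f).mpr
      ⟨snf.f.injective, by simp [hkn]⟩)
  let a' : Fin n → ℤ := snf.a ∘ ⇑fe.symm
  let bN' : Module.Basis (Fin n) ℤ N := snf.bN.reindex fe
  have hsnf' : ∀ i, (bN' i : Fin n → ℤ) = a' i • snf.bM i := by
    intro i
    have : snf.f (fe.symm i) = i := fe.apply_symm_apply i
    simp only [bN', a', Module.Basis.reindex_apply, Function.comp_apply, snf.snf, this]
  have ha0 : ∀ i, a' i ≠ 0 := by
    intro i hi
    apply Module.Basis.ne_zero bN' i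
    have := hsnf' i
    rw [hi, zero_smul] at this
    exact Subtype.ext this
  -- membership criterion
  have key : ∀ (c : Fin n → ℤ) (i : Fin n),
      snf.bM.repr (∑ j, c j • ((bN' j : Fin n → ℤ))) i = a' i * c i := by
    intro c i
    have : ∀ j, c j • ((bN' j : Fin n → ℤ)) = (c j * a' j) • snf.bM j := by
      intro j; rw [hsnf', smul_smul]
    simp_rw [this]
    rw [Module.Basis.repr_sum_self]
    ring
  have mem_iff : ∀ x : Fin n → ℤ, x ∈ N ↔ ∀ i, a' i ∣ snf.bM.repr x i := by
    intro x
    rw [Module.Basis.mem_submodule_iff' bN']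
    constructor
    · rintro ⟨c, rfl⟩ i
      exact ⟨c i, key c i⟩
    · intro h
      choose c hc using h
      refine ⟨c, ?_⟩
      apply snf.bM.ext_elem
      intro i
      rw [key c i, hc i]
  -- the diagonal submodule
  set I' : Submodule ℤ (Fin n → ℤ) :=
    Submodule.pi Set.univ (fun i => Ideal.span ({a' i} : Set ℤ)) with hI'def
  have hmap : Submodule.map (snf.bM.equivFun : (Fin n → ℤ) →ₗ[ℤ] (Fin n → ℤ)) N = I' := by
    ext x
    simp only [hI'def, Submodule.mem_map, Submodule.mem_pi, Ideal.mem_span_singleton,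
      Set.mem_univ, forall_true_left, LinearEquiv.coe_coe, Module.Basis.equivFun_apply, mem_iff]
    constructor
    · rintro ⟨y, hy, rfl⟩ i
      exact hy i
    · intro hdvd
      refine ⟨∑ i, x i • snf.bM i, fun i => ?_, ?_⟩
      · rw [Module.Basis.repr_sum_self]; exact hdvd i
      · ext i; rw [Module.Basis.repr_sum_self]
  let eq1 : ((Fin n → ℤ) ⧸ N) ≃ₗ[ℤ] ((Fin n → ℤ) ⧸ I') :=
    Submodule.Quotient.equiv N I' snf.bM.equivFun hmap
  let eq2 : ((Fin n → ℤ) ⧸ I') ≃ₗ[ℤ] ∀ i, ℤ ⧸ Ideal.span ({a' i} : Set ℤ) :=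
    Submodule.quotientPi _
  let eq3 : (∀ i, ℤ ⧸ Ideal.span ({a' i} : Set ℤ)) ≃+ ∀ i, ZMod (a' i).natAbs :=
    AddEquiv.piCongrRight fun i => ↑(Int.quotientSpanEquivZMod (a' i))
  refine ⟨fun i => (a' i).natAbs,
    ((eq1.trans eq2).toAddEquiv.trans eq3), fun i => Int.natAbs_ne_zero.mpr (ha0 i), ?_⟩
  -- the product of the diagonal entries is |det M|
  have hcomp : N.subtype ∘ₗ (e0 : (Fin n → ℤ) →ₗ[ℤ] N) = M.mulVecLin := by
    ext x i
    show (↑(e0 (Pi.single x 1)) : Fin n → ℤ) i = (M.mulVecLin (Pi.single x 1)) i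
    rfl
  have hdet1 : LinearMap.det (N.subtype ∘ₗ (e0 : (Fin n → ℤ) →ₗ[ℤ] N)) = M.det := by
    rw [hcomp, ← Matrix.toLin'_apply', LinearMap.det_toLin']
  have hsplit : (LinearMap.toMatrix snf.bM snf.bM) (N.subtype ∘ₗ (e0 : (Fin n → ℤ) →ₗ[ℤ] N))
      = (LinearMap.toMatrix bN' snf.bM N.subtype)
        * (LinearMap.toMatrix snf.bM bN' (e0 : (Fin n → ℤ) →ₗ[ℤ] N)) :=
    LinearMap.toMatrix_comp _ _ _ _ _
  have hdiag : LinearMap.toMatrix bN' snf.bM N.subtype = Matrix.diagonal a' := by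
    ext i j
    rw [LinearMap.toMatrix_apply]
    have : N.subtype (bN' j) = a' j • snf.bM j := hsnf' j
    rw [this, _root_.map_smul, Module.Basis.repr_self]
    by_cases h : i = j
    · subst h; simp
    · simp [Finsupp.single_apply, Ne.symm h, h]
  have hunit : IsUnit ((LinearMap.toMatrix snf.bM bN' (e0 : (Fin n → ℤ) →ₗ[ℤ] N)).det) := by
    have hmul : (LinearMap.toMatrix snf.bM bN' (e0 : (Fin n → ℤ) →ₗ[ℤ] N))
        * (LinearMap.toMatrix bN' snf.bM (e0.symm : N →ₗ[ℤ] (Fin n → ℤ))) = 1 := by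
      rw [← LinearMap.toMatrix_comp]
      have : (e0 : (Fin n → ℤ) →ₗ[ℤ] N) ∘ₗ (e0.symm : N →ₗ[ℤ] (Fin n → ℤ))
          = LinearMap.id := by
        ext x
        simp
      rw [this, LinearMap.toMatrix_id]
    have := congrArg Matrix.det hmul
    rw [Matrix.det_mul, Matrix.det_one] at this
    exact IsUnit.of_mul_eq_one _ this
  obtain ⟨u, hu⟩ := hunit
  have hdetM : M.det = (∏ i, a' i) * (u : ℤ) := by
    rw [← hdet1, ← LinearMap.det_toMatrix snf.bM, hsplit, Matrix.det_mul, hdiag,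
      Matrix.det_diagonal, hu]
  rw [hdetM, Int.natAbs_mul]
  have hprod : (∏ i, a' i).natAbs = ∏ i, (a' i).natAbs :=
    map_prod Int.natAbsHom a' Finset.univ
  rcases Int.units_eq_one_or u with h | h <;>
    simp [h, hprod]

/-- If `e` annihilates the quotient and the gcd of adjugate entries is 1,
then `|det M|` divides `e`. -/
lemma det_dvd_annihilator {n : ℕ} (hn : 2 ≤ n) (M : Matrix (Fin n) (Fin n) ℤ)
    (hd : detDivisor n M (n - 1) = 1) (e : ℕ)
    (he : ∀ q : (Fin n → ℤ) ⧸ LinearMap.range M.mulVecLin, e • q = 0) :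
    M.det.natAbs ∣ e := by
  classical
  have hx : ∀ x : Fin n → ℤ, ∃ y, M *ᵥ y = (e : ℤ) • x := by
    intro x
    have h1 := he (Submodule.Quotient.mk x)
    rw [← Nat.cast_smul_eq_nsmul ℤ, ← Submodule.Quotient.mk_smul,
      Submodule.Quotient.mk_eq_zero] at h1
    obtain ⟨y, hy⟩ := h1
    exact ⟨y, hy⟩
  choose y hy using fun j => hx (Pi.single j 1)
  let Y : Matrix (Fin n) (Fin n) ℤ := Matrix.of fun i j => y j i
  have hMY : M * Y = (e : ℤ) • 1 := by
    ext i j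
    have := congrFun (hy j) i
    simp only [Matrix.mulVec, dotProduct] at this
    simp only [Matrix.mul_apply, Y, Matrix.of_apply, Matrix.smul_apply, Matrix.one_apply,
      smul_eq_mul]
    rw [this]
    simp [Pi.single_apply]
  have h2 : M.det • Y = (e : ℤ) • M.adjugate := by
    calc M.det • Y = (M.det • (1 : Matrix (Fin n) (Fin n) ℤ)) * Y := by
          rw [Matrix.smul_mul, Matrix.one_mul]
      _ = (M.adjugate * M) * Y := by rw [Matrix.adjugate_mul]
      _ = M.adjugate * (M * Y) := by rw [Matrix.mul_assoc]
      _ = M.adjugate * ((e : ℤ) • 1) := by rw [hMY]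
      _ = (e : ℤ) • M.adjugate := by rw [Matrix.mul_smul, Matrix.mul_one]
  have h3 : ∀ i j, M.det.natAbs ∣ e * (M.adjugate i j).natAbs := by
    intro i j
    have := congrFun (congrFun h2 i) j
    simp only [Matrix.smul_apply, smul_eq_mul] at this
    have hdvd : M.det ∣ (e : ℤ) * M.adjugate i j := ⟨Y i j, this.symm⟩
    have := Int.natAbs_dvd_natAbs.mpr hdvd
    rwa [Int.natAbs_mul, Int.natAbs_natCast] at this
  have h4 : M.det.natAbs ∣
      Finset.univ.gcd (fun p : Fin n × Fin n => e * (M.adjugate p.1 p.2).natAbs) :=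
    Finset.dvd_gcd fun p _ => h3 p.1 p.2
  rw [Finset.gcd_mul_left] at h4
  rw [gcd_adj_eq_one hn M hd] at h4
  simpa using h4

end Aux

theorem stmt_9 (n : ℕ) (hn : 2 ≤ n) (M : Matrix (Fin n) (Fin n) ℤ) (hM : M.det ≠ 0)
    (hd : detDivisor n M (n - 1) = 1)
    (A : Set ((Fin n → ℤ) ⧸ LinearMap.range M.mulVecLin)) (hA : A.Finite) :
    ∃ (B : Set (ZMod M.det.natAbs))
      (e : ((Fin n → ℤ) ⧸ LinearMap.range M.mulVecLin) ≃ ZMod M.det.natAbs),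
      ∀ u v : (Fin n → ℤ) ⧸ LinearMap.range M.mulVecLin,
        v - u ∈ A ↔ e v - e u ∈ B := by
  classical
  obtain ⟨d, e1, hd0, hprod⟩ := exists_equiv_pi M hM
  haveI : ∀ i, NeZero (d i) := fun i => ⟨hd0 i⟩
  haveI hfin : Finite ((Fin n → ℤ) ⧸ LinearMap.range M.mulVecLin) :=
    Finite.of_equiv _ e1.toEquiv.symm
  have hcard : Nat.card ((Fin n → ℤ) ⧸ LinearMap.range M.mulVecLin) = M.det.natAbs := by
    rw [Nat.card_congr e1.toEquiv, Nat.card_pi]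
    simp only [Nat.card_zmod]
    exact hprod
  have hmexp : M.det.natAbs ∣
      AddMonoid.exponent ((Fin n → ℤ) ⧸ LinearMap.range M.mulVecLin) :=
    det_dvd_annihilator hn M hd _ (fun q => AddMonoid.exponent_nsmul_eq_zero q)
  have hexp : AddMonoid.exponent ((Fin n → ℤ) ⧸ LinearMap.range M.mulVecLin)
      = Nat.card ((Fin n → ℤ) ⧸ LinearMap.range M.mulVecLin) :=
    Nat.dvd_antisymm AddGroup.exponent_dvd_nat_card (hcard ▸ hmexp)
  have hcyc : IsAddCyclic ((Fin n → ℤ) ⧸ LinearMap.range M.mulVecLin) :=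
    IsAddCyclic.of_exponent_eq_card hexp
  obtain ⟨ψ⟩ : Nonempty
      (((Fin n → ℤ) ⧸ LinearMap.range M.mulVecLin) ≃+ ZMod M.det.natAbs) := by
    refine ⟨?_⟩
    rw [← hcard]
    exact (zmodAddCyclicAddEquiv hcyc).symm
  refine ⟨⇑ψ '' A, ψ.toEquiv, fun u v => ?_⟩
  constructor
  · intro h
    exact ⟨v - u, h, by simp [map_sub]⟩
  · rintro ⟨w, hw, hww⟩
    have : w = v - u := ψ.injective (by simpa [map_sub] using hww)
    rwa [← this]
end

section
/- Let M be a nonsingular n×n integer matrix such that m = |det M| is squarefree (not divisible by the square of any prime), and let A ⊆ ℤⁿ/Mℤⁿ be a finite set. Then the multidimensional circulant digraph G(M;A) is a circulant: there exist B ⊆ ℤ/mℤ and a bijection e : ℤⁿ/Mℤⁿ → ℤ/mℤ such that for all u, v, v − u ∈ A if and only if e(v) − e(u) ∈ B. -/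
private lemma stmt10_det_aux (n : ℕ) (N : Submodule ℤ (Fin n → ℤ))
    (snf : Module.Basis.SmithNormalForm N (Fin n) n)
    (g₁ : (Fin n → ℤ) →ₗ[ℤ] (Fin n → ℤ)) (e₁ : (Fin n → ℤ) ≃ₗ[ℤ] N)
    (hg₁ : N.subtype ∘ₗ (e₁ : (Fin n → ℤ) →ₗ[ℤ] N) = g₁) :
    (LinearMap.det g₁).natAbs = ∏ i, (snf.a i).natAbs := by
  classical
  set bM := snf.bM
  set bN := snf.bN
  set a := snf.a
  let σ : Equiv.Perm (Fin n) :=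
    Equiv.ofBijective snf.f (Finite.injective_iff_bijective.mp snf.f.injective)
  let e₂ : (Fin n → ℤ) ≃ₗ[ℤ] N := bM.equivFun.trans bN.equivFun.symm
  set g₂ : (Fin n → ℤ) →ₗ[ℤ] (Fin n → ℤ) := N.subtype ∘ₗ (e₂ : (Fin n → ℤ) →ₗ[ℤ] N) with hg₂def
  have hg₂ : ∀ i, g₂ (bM i) = (a i) • bM (snf.f i) := by
    intro i
    have : e₂ (bM i) = bN i := by
      simp [e₂, Module.Basis.equivFun_apply, Module.Basis.equivFun_symm_apply, Finsupp.single_apply,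
        Pi.single_apply]
    simp only [hg₂def, LinearMap.comp_apply, LinearEquiv.coe_coe, this, Submodule.subtype_apply]
    exact snf.snf i
  have hT : LinearMap.toMatrix bM bM g₂ = (Matrix.diagonal a).submatrix σ.symm _root_.id := by
    ext j i
    rw [LinearMap.toMatrix_apply, hg₂ i]
    have hiff : σ.symm j = i ↔ j = snf.f i := by
      constructor
      · rintro rfl; exact (σ.apply_symm_apply j).symm
      · rintro rfl; exact σ.symm_apply_apply i
    have hrepr : (bM.repr ((a i) • bM (snf.f i))) j = if snf.f i = j then a i else 0 := by
      rw [_root_.map_smul]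
      simp [Module.Basis.repr_self, Finsupp.single_apply]
    rw [hrepr]
    by_cases h : j = snf.f i
    · have h4 : σ.symm (snf.f i) = i := by simpa [σ] using σ.symm_apply_apply i
      simp [Matrix.submatrix_apply, Matrix.diagonal_apply, h, h4]
    · have h2 : ¬ σ.symm j = i := fun hc => h (hiff.mp hc)
      simp [Matrix.submatrix_apply, Matrix.diagonal_apply, h2, Ne.symm h]
  have hdet₂ : LinearMap.det g₂ = ((Equiv.Perm.sign σ.symm : ℤˣ) : ℤ) * ∏ i, a i := by
    rw [← LinearMap.det_toMatrix bM, hT]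
    have h := Matrix.det_permute σ.symm (Matrix.diagonal a)
    rw [← Matrix.det_diagonal (d := a)]
    convert h using 2
    simp
  let h3 : (Fin n → ℤ) ≃ₗ[ℤ] (Fin n → ℤ) := e₁.trans e₂.symm
  have hcomp : g₂ ∘ₗ (h3 : (Fin n → ℤ) →ₗ[ℤ] (Fin n → ℤ)) = g₁ := by
    ext x
    simp [hg₂def, ← hg₁, h3]
  have hdet1 : LinearMap.det g₁ =
      LinearMap.det g₂ * LinearMap.det (h3 : (Fin n → ℤ) →ₗ[ℤ] (Fin n → ℤ)) := by
    rw [← hcomp, LinearMap.det_comp]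
  have hu : IsUnit (LinearMap.det (h3 : (Fin n → ℤ) →ₗ[ℤ] (Fin n → ℤ))) :=
    LinearEquiv.isUnit_det' _
  have hu1 : (LinearMap.det (h3 : (Fin n → ℤ) →ₗ[ℤ] (Fin n → ℤ))).natAbs = 1 := by
    rcases Int.isUnit_iff.mp hu with h | h <;> simp [h]
  rw [hdet1, Int.natAbs_mul, hu1, mul_one, hdet₂, Int.natAbs_mul, Int.units_natAbs, one_mul]
  exact map_prod Int.natAbsHom a Finset.univ

private lemma stmt10_card_aux (n : ℕ) (M : Matrix (Fin n) (Fin n) ℤ) (hM : M.det ≠ 0) :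
    Nat.card ((Fin n → ℤ) ⧸ LinearMap.range M.mulVecLin) = M.det.natAbs := by
  classical
  set N := LinearMap.range M.mulVecLin with hN
  have hinj : Function.Injective M.mulVecLin := by
    rw [← LinearMap.ker_eq_bot, Matrix.ker_mulVecLin_eq_bot_iff]
    intro v hv
    by_contra hv0
    exact hM (Matrix.exists_mulVec_eq_zero_iff.mp ⟨v, hv0, hv⟩)
  obtain ⟨k, snf⟩ := N.smithNormalForm (Pi.basisFun ℤ (Fin n))
  have hne : N.toAddSubgroup.index ≠ 0 :=
    Int.submodule_toAddSubgroup_index_ne_zero_iff.mpr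
      ⟨(LinearEquiv.ofInjective M.mulVecLin hinj).symm⟩
  have hk : n = k := by simpa using (snf.toAddSubgroup_index_ne_zero_iff.mp hne).symm
  subst hk
  have hidx : N.toAddSubgroup.index = ∏ i, (snf.a i).natAbs := by
    rw [snf.toAddSubgroup_index_eq_ite]
    simp [Int.index_zmultiples]
  -- determinant of mulVecLin through the range equiv
  have hsub : N.subtype ∘ₗ ((LinearEquiv.ofInjective M.mulVecLin hinj :
      (Fin n → ℤ) ≃ₗ[ℤ] N) : (Fin n → ℤ) →ₗ[ℤ] N) = M.mulVecLin := by
    ext x j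
    rfl
  have hdet : (LinearMap.det M.mulVecLin).natAbs = ∏ i, (snf.a i).natAbs :=
    stmt10_det_aux n N snf M.mulVecLin (LinearEquiv.ofInjective M.mulVecLin hinj) hsub
  have hdet' : LinearMap.det M.mulVecLin = M.det := by
    rw [← Matrix.toLin'_apply', LinearMap.det_toLin']
  -- Nat.card of the module quotient equals the index of the additive subgroup
  have hker : (N.mkQ.toAddMonoidHom).ker = N.toAddSubgroup := by
    ext x
    simp [AddMonoidHom.mem_ker, Submodule.Quotient.mk_eq_zero]
  have hcard : Nat.card ((Fin n → ℤ) ⧸ N) = N.toAddSubgroup.index := by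
    have hsurj : Function.Surjective N.mkQ.toAddMonoidHom := Submodule.mkQ_surjective N
    have e := QuotientAddGroup.quotientKerEquivOfSurjective _ hsurj
    rw [← Nat.card_congr e.toEquiv, AddSubgroup.index, hker]
  rw [hcard, hidx, ← hdet, hdet']

/-- Let `M` be a nonsingular `n × n` integer matrix such that
`m = |det M|` is squarefree, and let `A ⊆ ℤⁿ/Mℤⁿ` be a finite set.  Then the
multidimensional circulant digraph `G(M;A)` is a circulant: there exist `B ⊆ ℤ/mℤ`
and a bijection `e : ℤⁿ/Mℤⁿ → ℤ/mℤ` such that for all `u, v`, `v - u ∈ A` if and only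
if `e v - e u ∈ B`. -/
theorem stmt_10 (n : ℕ) (M : Matrix (Fin n) (Fin n) ℤ) (hM : M.det ≠ 0)
    (hsf : Squarefree M.det.natAbs)
    (A : Set ((Fin n → ℤ) ⧸ LinearMap.range M.mulVecLin)) (hA : A.Finite) :
    ∃ (B : Set (ZMod M.det.natAbs))
      (e : ((Fin n → ℤ) ⧸ LinearMap.range M.mulVecLin) ≃ ZMod M.det.natAbs),
      ∀ u v : (Fin n → ℤ) ⧸ LinearMap.range M.mulVecLin,
        v - u ∈ A ↔ e v - e u ∈ B := by
  classical
  let Q := (Fin n → ℤ) ⧸ LinearMap.range M.mulVecLin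
  have hcard : Nat.card Q = M.det.natAbs := stmt10_card_aux n M hM
  have hfin : Finite Q := Nat.finite_of_card_ne_zero (by rw [hcard]; exact hsf.ne_zero)
  -- Q is cyclic since its order is squarefree and it is abelian
  have hsfQ : Squarefree (Nat.card Q) := hcard ▸ hsf
  haveI : Finite (Multiplicative Q) := hfin
  have hGcard : Nat.card (Multiplicative Q) = Nat.card Q :=
    Nat.card_congr Multiplicative.toAdd
  have h1 : Monoid.exponent (Multiplicative Q) ∣ Nat.card (Multiplicative Q) :=
    Group.exponent_dvd_nat_card
  have h2 : Nat.card (Multiplicative Q) ∣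
      Monoid.exponent (Multiplicative Q) ^ Group.rank (Multiplicative Q) :=
    card_dvd_exponent_pow_rank (Multiplicative Q)
  have h3 : Nat.card (Multiplicative Q) ∣ Monoid.exponent (Multiplicative Q) := by
    rcases Nat.eq_zero_or_pos (Group.rank (Multiplicative Q)) with h | h
    · rw [h, pow_zero] at h2
      exact (Nat.dvd_one.mp h2) ▸ one_dvd _
    · exact ((hGcard ▸ hsfQ).dvd_pow_iff_dvd h.ne').mp h2
  haveI : IsCyclic (Multiplicative Q) :=
    IsCyclic.of_exponent_eq_card (Nat.dvd_antisymm h1 h3)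
  haveI hcyc : IsAddCyclic Q := isCyclic_multiplicative_iff.mp this
  have e0 : ZMod (Nat.card Q) ≃+ Q := zmodAddCyclicAddEquiv hcyc
  have e1 : ZMod M.det.natAbs ≃+ Q := hcard ▸ e0
  let e : Q ≃+ ZMod M.det.natAbs := e1.symm
  refine ⟨(fun x => e x) '' A, e.toEquiv, fun u v => ?_⟩
  have : e.toEquiv v - e.toEquiv u = e (v - u) := by simp [map_sub]
  rw [this]
  exact (Function.Injective.mem_set_image e.injective).symm
end

section
/- Let p be a prime with p > 2 and n ≥ 1, and let G be the n-fold cartesian product K_p × ⋯ × K_p of complete graphs on p vertices: the simple graph on vertex set (ℤ/pℤ)ⁿ in which u and v are adjacent if and only if there exists exactly one index i with u(i) ≠ v(i) and u(j) = v(j) for all j ≠ i (the Hamming graph H(n,p)). Then every abelian group Ω of adjacency-preserving permutations of the vertex set that acts transitively on the vertices and has cardinality pⁿ is isomorphic as a group to (ℤ/pℤ)ⁿ; hence K_p × ⋯ × K_p has dimension n. -/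
lemma aux_elem_abelian {G : Type} [CommGroup G] [Finite G] {p n : ℕ} (hp : p.Prime)
    (hcard : Nat.card G = p ^ n) (hexp : ∀ g : G, g ^ p = 1) :
    Nonempty (G ≃* Multiplicative (Fin n → ZMod p)) := by
  haveI : Fact p.Prime := ⟨hp⟩
  haveI : NeZero p := ⟨hp.pos.ne'⟩
  letI iA : AddCommGroup (Additive G) := Additive.addCommGroup
  letI : Module (ZMod p) (Additive G) := AddCommGroup.zmodModule (by
    intro x
    apply Additive.toMul.injective
    rw [toMul_nsmul]
    exact hexp _)
  haveI chk : Module (ZMod p) (Additive G) := inferInstance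
  haveI : Module.Finite (ZMod p) (Additive G) := Module.Finite.of_finite
  letI : Fintype (Additive G) := Fintype.ofFinite _
  have hrank : Module.finrank (ZMod p) (Additive G) = n := by
    have hcardA : Fintype.card (Additive G) =
        (Fintype.card (ZMod p)) ^ Module.finrank (ZMod p) (Additive G) :=
      Module.card_eq_pow_finrank
    have hcA : Fintype.card (Additive G) = p ^ n := by
      rw [← Nat.card_eq_fintype_card]; exact hcard
    rw [hcA, ZMod.card] at hcardA
    exact Nat.pow_right_injective hp.two_le hcardA.symm
  have hrank2 : Module.finrank (ZMod p) (Fin n → ZMod p) = n := by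
    simp [Module.finrank_pi]
  have hEquiv : Nonempty ((Additive G) ≃ₗ[ZMod p] (Fin n → ZMod p)) :=
    FiniteDimensional.nonempty_linearEquiv_of_finrank_eq (hrank.trans hrank2.symm)
  obtain ⟨e⟩ := hEquiv
  exact ⟨(MulEquiv.multiplicativeAdditive G).symm.trans
    (AddEquiv.toMultiplicative e.toAddEquiv)⟩

/-- Let `p > 2` be a prime and `n ≥ 1`, and let `G` be the `n`-fold
cartesian product `K_p × ⋯ × K_p` of complete graphs on `p` vertices (the Hamming graph
`H(n,p)`): the graph on `(ℤ/pℤ)ⁿ` in which `u` and `v` are adjacent iff they differ in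
exactly one coordinate.  Then every abelian group `Ω` of adjacency-preserving
permutations of the vertex set that acts transitively on the vertices and has
cardinality `pⁿ` is isomorphic as a group to `(ℤ/pℤ)ⁿ`; hence `K_p × ⋯ × K_p` has
dimension `n`. -/
theorem stmt_15 (p n : ℕ) (hp : p.Prime) (hp2 : 2 < p) (hn : 1 ≤ n)
    (Adj : (Fin n → ZMod p) → (Fin n → ZMod p) → Prop)
    (hAdj : ∀ u v, Adj u v ↔ ∃ i, u i ≠ v i ∧ ∀ j ≠ i, u j = v j)
    (Ω : Subgroup (Equiv.Perm (Fin n → ZMod p)))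
    (hcomm : ∀ σ ∈ Ω, ∀ τ ∈ Ω, σ * τ = τ * σ)
    (haut : ∀ σ ∈ Ω, ∀ u v, Adj (σ u) (σ v) ↔ Adj u v)
    (htrans : ∀ u v : Fin n → ZMod p, ∃ σ ∈ Ω, σ u = v)
    (hcard : Nat.card Ω = p ^ n) :
    Nonempty (Ω ≃* Multiplicative (Fin n → ZMod p)) := by
  classical
  haveI : Fact p.Prime := ⟨hp⟩
  haveI : NeZero p := ⟨hp.pos.ne'⟩
  -- regularity: an element of Ω fixing a point is the identity
  have hreg : ∀ τ ∈ Ω, ∀ u : Fin n → ZMod p, τ u = u → τ = 1 := by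
    intro τ hτ u h
    refine Equiv.ext fun v => ?_
    obtain ⟨ρ, hρ, hρv⟩ := htrans u v
    have h2 := congrArg (fun π : Equiv.Perm (Fin n → ZMod p) => π u) (hcomm τ hτ ρ hρ)
    simpa [Equiv.Perm.mul_apply, h, hρv] using h2
  -- triangle lemma
  have tri : ∀ (u v w : Fin n → ZMod p) (i : Fin n), u i ≠ v i → (∀ j ≠ i, u j = v j) →
      Adj u w → Adj v w → u i ≠ w i ∧ ∀ j ≠ i, u j = w j := by
    intro u v w i h1 h2 huw hvw
    obtain ⟨i2, h2a, h2b⟩ := (hAdj u w).1 huw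
    obtain ⟨i3, h3a, h3b⟩ := (hAdj v w).1 hvw
    have hi2 : i2 = i := by
      by_contra hne
      have hwu : u i = w i := h2b i (Ne.symm hne)
      have hvwi : v i ≠ w i := fun h => h1 (by rw [h, ← hwu])
      have hi3 : i3 = i := by
        by_contra hne3
        exact hvwi (h3b i (Ne.symm hne3))
      apply h2a
      have e1 : u i2 = v i2 := h2 i2 hne
      have e2 : v i2 = w i2 := h3b i2 (by rw [hi3]; exact hne)
      rw [e1, e2]
    subst hi2
    exact ⟨h2a, h2b⟩
  -- key lemma: elements moving 0 to a neighbour of 0 have order dividing p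
  have key : ∀ σ : Equiv.Perm (Fin n → ZMod p), σ ∈ Ω → Adj 0 (σ 0) → σ ^ p = 1 := by
    intro σ hσ hadj
    obtain ⟨i, hia, hib⟩ := (hAdj 0 (σ 0)).1 hadj
    have hia' : σ 0 i ≠ 0 := fun h => hia (by simpa using h.symm)
    have hib' : ∀ j, j ≠ i → σ 0 j = 0 := fun j hj => by simpa using (hib j hj).symm
    -- choose s ∉ {0, (σ 0) i}
    have h1ne0 : (1 : ZMod p) ≠ 0 := one_ne_zero
    have h2ne0 : (2 : ZMod p) ≠ 0 := by
      have : ((2 : ℕ) : ZMod p) ≠ 0 := by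
        rw [Ne, ZMod.natCast_eq_zero_iff]
        intro hdvd
        have := Nat.le_of_dvd (by norm_num) hdvd
        omega
      simpa using this
    have h21 : (2 : ZMod p) ≠ 1 := by
      intro h
      apply h1ne0
      have : (2 : ZMod p) - 1 = 0 := by rw [h]; ring
      calc (1 : ZMod p) = 2 - 1 := by ring
      _ = 0 := this
    set s : ZMod p := if σ 0 i = 1 then 2 else 1 with hs
    have hs0 : s ≠ 0 := by
      rw [hs]; split
      · exact h2ne0
      · exact h1ne0
    have hsa : s ≠ σ 0 i := by
      rw [hs]; split
      · next h => rw [h]; exact h21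
      · next h => exact fun h' => h h'.symm
    set b : Fin n → ZMod p := fun j => if j = i then s else 0 with hbdef
    have hb_i : b i = s := if_pos rfl
    have hb_off : ∀ j, j ≠ i → b j = 0 := fun j hj => if_neg hj
    have hadj0b : Adj 0 b := (hAdj 0 b).2
      ⟨i, by rw [hb_i]; simpa using Ne.symm hs0, fun j hj => by simp [hb_off j hj]⟩
    have hadjab : Adj (σ 0) b := (hAdj (σ 0) b).2
      ⟨i, by rw [hb_i]; exact fun h => hsa h.symm,
        fun j hj => by rw [hib' j hj, hb_off j hj]⟩
    obtain ⟨τ, hτΩ, hτ0⟩ := htrans 0 b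
    have hcom : ∀ x, σ (τ x) = τ (σ x) := by
      intro x
      have := congrArg (fun π : Equiv.Perm (Fin n → ZMod p) => π x) (hcomm σ hσ τ hτΩ)
      simpa [Equiv.Perm.mul_apply] using this
    have hσb : σ b = τ (σ 0) := by rw [← hτ0, hcom 0]
    -- Step 1: σ (σ 0) differs from σ 0 only in coordinate i
    have hstep1 : σ 0 i ≠ σ (σ 0) i ∧ ∀ j ≠ i, σ (σ 0) j = σ 0 j := by
      obtain ⟨k, hk1, hk2⟩ := (hAdj (σ 0) (σ (σ 0))).1 ((haut σ hσ 0 (σ 0)).2 hadj)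
      have hki : k = i := by
        by_contra hki
        have t1 := tri (σ 0) (σ (σ 0)) (σ b) k hk1 hk2
          ((haut σ hσ 0 b).2 hadj0b) ((haut σ hσ (σ 0) b).2 hadjab)
        have hbτ : Adj b (τ (σ 0)) := by
          have := (haut τ hτΩ 0 (σ 0)).2 hadj
          rwa [hτ0] at this
        obtain ⟨m, hm1, hm2⟩ := (hAdj b (τ (σ 0))).1 hbτ
        by_cases hmi : m = i
        · have e1 : τ (σ 0) k = b k := (hm2 k (by rw [hmi]; exact hki)).symm
          have e2 : b k = 0 := hb_off k hki
          have e3 : σ 0 k = 0 := hib' k hki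
          exact t1.1 (by rw [hσb, e1, e2, e3])
        · have e1 : τ (σ 0) i = b i := (hm2 i (Ne.symm hmi)).symm
          have e2 : σ 0 i = σ b i := t1.2 i (Ne.symm hki)
          apply hsa
          rw [← hb_i, ← e1, ← hσb]
          exact e2.symm
      rw [hki] at hk1 hk2
      exact ⟨hk1, fun j hj => (hk2 j hj).symm⟩
    -- Step 2: σ maps the line through 0 in direction i into itself
    have hline : ∀ x : Fin n → ZMod p, (∀ j, j ≠ i → x j = 0) → ∀ j, j ≠ i → σ x j = 0 := by
      intro x hx j hj
      by_cases hx0 : x = 0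
      · subst hx0; exact hib' j hj
      by_cases hxa : x = σ 0
      · subst hxa; exact (hstep1.2 j hj).trans (hib' j hj)
      · have hxi : x i ≠ 0 := by
          intro h
          apply hx0
          funext j'
          by_cases hj' : j' = i
          · subst hj'; simpa using h
          · simpa using hx j' hj'
        have hxadj0 : Adj 0 x := (hAdj 0 x).2
          ⟨i, by simpa using Ne.symm hxi, fun j' hj' => by simp [hx j' hj']⟩
        have hxadja : Adj (σ 0) x := (hAdj (σ 0) x).2
          ⟨i, fun h => hxa (funext fun j' => by
              by_cases hj' : j' = i
              · subst hj'; exact h.symm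
              · rw [hx j' hj', hib' j' hj']),
            fun j' hj' => by rw [hib' j' hj', hx j' hj']⟩
        have t := tri (σ 0) (σ (σ 0)) (σ x) i hstep1.1
          (fun j' hj' => (hstep1.2 j' hj').symm)
          ((haut σ hσ 0 x).2 hxadj0) ((haut σ hσ (σ 0) x).2 hxadja)
        exact (t.2 j hj).symm.trans (hib' j hj)
    -- Step 3: the whole ⟨σ⟩-orbit of 0 stays on the line
    have horb : ∀ m : ℕ, ∀ j, j ≠ i → (σ ^ m) 0 j = 0 := by
      intro m
      induction m with
      | zero => intro j hj; simp
      | succ m ih =>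
        intro j hj
        have hrw : (σ ^ (m + 1)) 0 = σ ((σ ^ m) 0) := by
          rw [pow_succ', Equiv.Perm.mul_apply]
        rw [hrw]
        exact hline _ ih j hj
    -- Step 4: pigeonhole gives σ ^ d = 1 with 0 < d ≤ p, hence σ ^ p = 1
    have horder : ∀ m1 m2 : ℕ, m1 < m2 → m2 ≤ p →
        (σ ^ m1) 0 = (σ ^ m2) 0 → σ ^ p = 1 := by
      intro m1 m2 hlt hle heq2
      have hfix : (σ ^ (m2 - m1)) ((σ ^ m1) 0) = (σ ^ m1) 0 := by
        rw [← Equiv.Perm.mul_apply, ← pow_add, Nat.sub_add_cancel hlt.le]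
        exact heq2.symm
      have h1 : σ ^ (m2 - m1) = 1 := hreg _ (Ω.pow_mem hσ _) _ hfix
      have hd1 : orderOf σ ∣ m2 - m1 := orderOf_dvd_of_pow_eq_one h1
      have hdle : orderOf σ ≤ p :=
        le_trans (Nat.le_of_dvd (by omega) hd1) (by omega)
      have hdvd : orderOf σ ∣ p ^ n := by
        have hx : (⟨σ, hσ⟩ : Ω) ^ (p ^ n) = 1 := by
          rw [← hcard]; exact pow_card_eq_one'
        have hx2 : σ ^ (p ^ n) = 1 := by
          have := congrArg (Subtype.val) hx
          simpa using this
        exact orderOf_dvd_of_pow_eq_one hx2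
      obtain ⟨t, htn, hteq⟩ := (Nat.dvd_prime_pow hp).1 hdvd
      have ht1 : t ≤ 1 := by
        by_contra hcon
        push_neg at hcon
        have h2t : p ^ 2 ≤ p ^ t := Nat.pow_le_pow_right hp.pos (by omega)
        have hple : p ^ 2 ≤ p := by rw [← hteq] at h2t; omega
        have : 2 * p ≤ p * p := Nat.mul_le_mul_right p hp.two_le
        rw [pow_two] at hple
        omega
      have hfin : orderOf σ ∣ p := by
        rw [hteq]
        calc p ^ t ∣ p ^ 1 := pow_dvd_pow p ht1
        _ = p := pow_one p
      exact orderOf_dvd_iff_pow_eq_one.1 hfin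
    obtain ⟨m1, m2, hne, heq⟩ := Fintype.exists_ne_map_eq_of_card_lt
      (fun m : Fin (p + 1) => (σ ^ (m : ℕ)) 0 i) (by simp [ZMod.card])
    have hveq : (σ ^ (m1 : ℕ)) 0 = (σ ^ (m2 : ℕ)) 0 := by
      funext j
      by_cases hj : j = i
      · subst hj; exact heq
      · rw [horb _ j hj, horb _ j hj]
    rcases lt_or_gt_of_ne hne with h | h
    · exact horder m1 m2 h (by have := m2.isLt; omega) hveq
    · exact horder m2 m1 h (by have := m1.isLt; omega) hveq.symm
  -- every element of Ω has order dividing p, by induction on Hamming weight of σ 0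
  have expall : ∀ σ : Equiv.Perm (Fin n → ZMod p), σ ∈ Ω → σ ^ p = 1 := by
    suffices main : ∀ d : ℕ, ∀ σ : Equiv.Perm (Fin n → ZMod p), σ ∈ Ω →
        (Finset.univ.filter fun j => σ 0 j ≠ 0).card ≤ d → σ ^ p = 1 by
      intro σ hσ; exact main _ σ hσ le_rfl
    intro d
    induction d with
    | zero =>
      intro σ hσ hw
      have h0 : σ 0 = 0 := by
        funext j
        by_contra hj
        have hjmem : j ∈ Finset.univ.filter fun j => σ 0 j ≠ 0 := by
          simp only [Finset.mem_filter, Finset.mem_univ, true_and]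
          simpa using hj
        have := Finset.card_pos.2 ⟨j, hjmem⟩
        omega
      rw [hreg σ hσ 0 h0]; exact one_pow p
    | succ d ih =>
      intro σ hσ hw
      by_cases h0 : σ 0 = 0
      · rw [hreg σ hσ 0 h0]; exact one_pow p
      · have hex : ∃ i, σ 0 i ≠ 0 := by
          by_contra hno; push_neg at hno; exact h0 (funext hno)
        obtain ⟨i, hi⟩ := hex
        set w : Fin n → ZMod p := Function.update (σ 0) i 0 with hwdef
        obtain ⟨ρ, hρ, hρ0⟩ := htrans 0 w
        have hwcard : (Finset.univ.filter fun j => ρ 0 j ≠ 0).card ≤ d := by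
          rw [hρ0]
          have hsub : (Finset.univ.filter fun j => w j ≠ 0) ⊆
              (Finset.univ.filter fun j => σ 0 j ≠ 0).erase i := by
            intro j hj
            simp only [Finset.mem_filter, Finset.mem_univ, true_and] at hj
            have hji : j ≠ i := by
              rintro rfl; exact hj (by rw [hwdef]; simp)
            refine Finset.mem_erase.2 ⟨hji, ?_⟩
            simp only [Finset.mem_filter, Finset.mem_univ, true_and]
            rwa [hwdef, Function.update_of_ne hji] at hj
          have hmem : i ∈ Finset.univ.filter fun j => σ 0 j ≠ 0 := by
            simp only [Finset.mem_filter, Finset.mem_univ, true_and]; exact hi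
          calc (Finset.univ.filter fun j => w j ≠ 0).card
              ≤ ((Finset.univ.filter fun j => σ 0 j ≠ 0).erase i).card :=
                Finset.card_le_card hsub
          _ = (Finset.univ.filter fun j => σ 0 j ≠ 0).card - 1 :=
                Finset.card_erase_of_mem hmem
          _ ≤ d := by omega
        have hρp : ρ ^ p = 1 := ih ρ hρ hwcard
        have hτΩ : σ * ρ⁻¹ ∈ Ω := Ω.mul_mem hσ (Ω.inv_mem hρ)
        have hτ0 : (σ * ρ⁻¹) 0 = ρ⁻¹ (σ 0) := by
          rw [hcomm σ hσ ρ⁻¹ (Ω.inv_mem hρ), Equiv.Perm.mul_apply]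
        have hadjwv : Adj w (σ 0) := (hAdj w (σ 0)).2
          ⟨i, by rw [hwdef]; simpa using Ne.symm hi,
            fun j hj => by rw [hwdef, Function.update_of_ne hj]⟩
        have hadj0 : Adj 0 ((σ * ρ⁻¹) 0) := by
          rw [hτ0]
          have h5 := (haut ρ⁻¹ (Ω.inv_mem hρ) w (σ 0)).2 hadjwv
          rwa [show ρ⁻¹ w = 0 from by rw [← hρ0]; exact Equiv.symm_apply_apply ρ 0] at h5
        have hτp : (σ * ρ⁻¹) ^ p = 1 := key _ hτΩ hadj0
        have hcm : Commute (σ * ρ⁻¹) ρ := hcomm _ hτΩ _ hρ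
        calc σ ^ p = ((σ * ρ⁻¹) * ρ) ^ p := by rw [inv_mul_cancel_right]
        _ = (σ * ρ⁻¹) ^ p * ρ ^ p := hcm.mul_pow p
        _ = 1 := by rw [hτp, hρp, one_mul]
  -- Ω is a finite elementary abelian p-group of cardinality p ^ n
  have hfinΩ : Finite Ω := by
    have : 0 < Nat.card Ω := by rw [hcard]; exact pow_pos hp.pos n
    exact (Nat.card_pos_iff.mp this).2
  have hexp : ∀ y : Ω, y ^ p = 1 := by
    intro y
    have : ((y ^ p : Ω) : Equiv.Perm (Fin n → ZMod p)) = ((1 : Ω) : Equiv.Perm (Fin n → ZMod p)) := by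
      push_cast
      simpa using expall (y : Equiv.Perm (Fin n → ZMod p)) y.2
    exact Subtype.ext this
  letI iC : CommGroup Ω :=
    { (inferInstance : Group Ω) with
      mul_comm := fun a b => Subtype.ext (hcomm a a.2 b b.2) }
  exact aux_elem_abelian hp hcard hexp
end

section
/- Let p be a prime with p > 2 and n ≥ 1, and let G be the n-fold cartesian product of p-cycles: the simple graph on vertex set (ℤ/pℤ)ⁿ in which u and v are adjacent if and only if there exists an index i with v(i) − u(i) ∈ {1, −1} and u(j) = v(j) for all j ≠ i. Then every abelian group Ω of adjacency-preserving permutations of the vertex set that acts transitively on the vertices and has cardinality pⁿ is isomorphic as a group to (ℤ/pℤ)ⁿ; hence the cartesian product of n p-cycles has dimension n. -/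
namespace Stmt16
open Finset

variable {p n : ℕ}

/-- The set of steps: `± e i`. -/
def S (p n : ℕ) : Set (Fin n → ZMod p) :=
  {x | ∃ i d, (d = 1 ∨ d = -1) ∧ x = Pi.single i d}

lemma sg_apply (i j : Fin n) (x : ZMod p) :
    (Pi.single i x : Fin n → ZMod p) j = if j = i then x else 0 := Pi.single_apply i x j

lemma sg_same (i : Fin n) (x : ZMod p) : (Pi.single i x : Fin n → ZMod p) i = x := by
  simp [sg_apply]

lemma sg_ne {j i : Fin n} (h : j ≠ i) (x : ZMod p) :
    (Pi.single i x : Fin n → ZMod p) j = 0 := by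
  simp [sg_apply, h]

lemma sg_add (i : Fin n) (x y : ZMod p) :
    (Pi.single i (x + y) : Fin n → ZMod p) = Pi.single i x + Pi.single i y := by
  funext j; simp only [sg_apply, Pi.add_apply]; split <;> simp
lemma sg_neg (i : Fin n) (x : ZMod p) :
    (Pi.single i (-x) : Fin n → ZMod p) = -Pi.single i x := by
  funext j; simp only [sg_apply, Pi.neg_apply]; split <;> simp
lemma sg_smul (i : Fin n) (c x : ZMod p) :
    (Pi.single i (c * x) : Fin n → ZMod p) = c • (Pi.single i x : Fin n → ZMod p) := by
  funext j; simp only [sg_apply, Pi.smul_apply, smul_eq_mul]; split <;> simp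
lemma sg_nsmul (i : Fin n) (m : ℕ) (x : ZMod p) :
    (Pi.single i ((m : ZMod p) * x) : Fin n → ZMod p) = m • (Pi.single i x : Fin n → ZMod p) := by
  funext j; simp only [sg_apply, Pi.smul_apply, nsmul_eq_mul]; split <;> simp

lemma neg_mem_S {x : Fin n → ZMod p} (hx : x ∈ S p n) : -x ∈ S p n := by
  obtain ⟨i, d, hd, rfl⟩ := hx
  refine ⟨i, -d, ?_, (sg_neg i d).symm⟩
  rcases hd with rfl | rfl
  · right; rfl
  · left; simp

section Basic
variable (hp : p.Prime) (hp2 : 2 < p)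
include hp hp2

omit hp in
lemma two_ne : (2 : ZMod p) ≠ 0 := by
  haveI : NeZero p := ⟨by omega⟩
  intro h
  have hd : p ∣ 2 := by
    have := (ZMod.natCast_eq_zero_iff 2 p).mp (by exact_mod_cast h)
    exact this
  have := Nat.le_of_dvd (by norm_num) hd
  omega

omit hp2 in
lemma d_ne_zero {d : ZMod p} (hd : d = 1 ∨ d = -1) : d ≠ 0 := by
  haveI := Fact.mk hp
  rcases hd with rfl | rfl
  · exact one_ne_zero
  · exact neg_ne_zero.mpr one_ne_zero

omit hp2 in
lemma mem_S_ne_zero {x : Fin n → ZMod p} (hx : x ∈ S p n) : x ≠ 0 := by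
  obtain ⟨i, d, hd, rfl⟩ := hx
  intro h
  exact d_ne_zero hp hd (by simpa [sg_same] using congrFun h i)

/-- Unique common neighbor of `a + s` and `a - s`. -/
lemma uniqueCN {a s w : Fin n → ZMod p} (hs : s ∈ S p n)
    (h1 : w - (a + s) ∈ S p n) (h2 : w - (a - s) ∈ S p n) : w = a := by
  haveI := Fact.mk hp
  obtain ⟨i, d, hd, rfl⟩ := hs
  obtain ⟨j, c, hc, hj⟩ := h1
  obtain ⟨k, c', hc', hk⟩ := h2
  have h2ne := two_ne hp2
  have h4 : (4 : ZMod p) ≠ 0 := by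
    have h44 : (4 : ZMod p) = 2 * 2 := by norm_num
    rw [h44]; exact mul_ne_zero h2ne h2ne
  have key : (Pi.single k c' : Fin n → ZMod p) - Pi.single j c = Pi.single i (2 * d) := by
    have h2d : (Pi.single i (2*d) : Fin n → ZMod p) = Pi.single i d + Pi.single i d := by
      rw [two_mul, sg_add]
    rw [h2d, ← hj, ← hk]; ring
  by_cases hjk : j = k
  · subst hjk
    by_cases hji : j = i
    · subst hji
      have hcc : c' - c = 2 * d := by
        have ev := congrFun key j
        rw [Pi.sub_apply, sg_same, sg_same, sg_same] at ev
        exact ev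
      have hw : w = a + Pi.single j d + Pi.single j c := by rw [← hj]; ring
      have conc : c = -d → w = a := by
        rintro rfl
        rw [hw, add_assoc, ← sg_add]
        simp
      rcases hd with rfl | rfl <;> rcases hc with rfl | rfl <;> rcases hc' with rfl | rfl
      · exact absurd (by linear_combination -hcc) h2ne
      · exact absurd (by linear_combination -hcc) h4
      · exact conc (by norm_num)
      · exact absurd (by linear_combination -hcc) h2ne
      · exact absurd (by linear_combination hcc) h2ne
      · exact conc (by norm_num)
      · exact absurd (by linear_combination hcc) h4
      · exact absurd (by linear_combination hcc) h2ne
    · exfalso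
      have hcc : c' = c := by
        have ev := congrFun key j
        rw [Pi.sub_apply, sg_same, sg_same, sg_ne hji] at ev
        linear_combination ev
      rw [hcc] at hk
      have heq : a + Pi.single i d = a - Pi.single i d := sub_right_inj.mp (hj.trans hk.symm)
      have ev := congrFun heq i
      rw [Pi.add_apply, Pi.sub_apply, sg_same] at ev
      exact mul_ne_zero h2ne (d_ne_zero hp hd) (by linear_combination ev)
  · exfalso
    by_cases hji : j = i
    · subst hji
      have ev := congrFun key k
      rw [Pi.sub_apply, sg_same, sg_ne (fun h : k = j => hjk h.symm) c,
        sg_ne (fun h : k = j => hjk h.symm) (2*d)] at ev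
      exact d_ne_zero hp hc' (by linear_combination ev)
    · have ev := congrFun key j
      rw [Pi.sub_apply, sg_ne hjk c', sg_same, sg_ne hji (2*d)] at ev
      exact d_ne_zero hp hc (by linear_combination -ev)

/-- The two common neighbors of `a + single i d` and `a + single k eps` when `i ≠ k`. -/
lemma twoCN {a w : Fin n → ZMod p} {i k : Fin n} {d ε : ZMod p}
    (hd : d = 1 ∨ d = -1) (hε : ε = 1 ∨ ε = -1) (hik : i ≠ k)
    (h1 : w - (a + Pi.single i d) ∈ S p n) (h2 : w - (a + Pi.single k ε) ∈ S p n) :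
    w = a ∨ w = a + Pi.single i d + Pi.single k ε := by
  haveI := Fact.mk hp
  obtain ⟨j, c, hc, hj⟩ := h1
  obtain ⟨j', c', hc', hj'⟩ := h2
  have hw : w = a + Pi.single i d + Pi.single j c := by rw [← hj]; ring
  have hw' : w = a + Pi.single k ε + Pi.single j' c' := by rw [← hj']; ring
  have key : (Pi.single i d : Fin n → ZMod p) + Pi.single j c
      = Pi.single k ε + Pi.single j' c' := by
    have h := hw.symm.trans hw'
    linear_combination h
  by_cases hji : j = i
  · subst hji
    left
    have evk := congrFun key k
    rw [Pi.add_apply, Pi.add_apply, sg_ne (Ne.symm hik) d, sg_ne (Ne.symm hik) c,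
      sg_same] at evk
    by_cases hj'k : j' = k
    · subst hj'k
      rw [sg_same] at evk
      have hcε : c' = -ε := by linear_combination -evk
      have hz : (Pi.single j d : Fin n → ZMod p) + Pi.single j c = 0 := by
        rw [key, hcε, ← sg_add]
        simp
      have hcd : d + c = 0 := by
        have ev := congrFun hz j
        rw [Pi.add_apply, sg_same, sg_same] at ev
        simpa using ev
      rw [hw, add_assoc, ← sg_add, hcd]
      simp
    · exfalso
      rw [sg_ne (fun h : k = j' => hj'k h.symm) c'] at evk
      exact d_ne_zero hp hε (by linear_combination -evk)
  · by_cases hjk : j = k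
    · subst hjk
      right
      have evi := congrFun key i
      rw [Pi.add_apply, Pi.add_apply, sg_same, sg_ne hik c, sg_ne hik ε] at evi
      by_cases hj'i : j' = i
      · subst hj'i
        rw [sg_same] at evi
        have hjj := congrFun key j
        rw [Pi.add_apply, Pi.add_apply, sg_ne (Ne.symm hik) d, sg_same, sg_same,
          sg_ne (Ne.symm hik) c'] at hjj
        have hcε : c = ε := by linear_combination hjj
        rw [hw, hcε]
      · exfalso
        rw [sg_ne (fun h : i = j' => hj'i h.symm) c'] at evi
        exact d_ne_zero hp hd (by linear_combination evi)
    · exfalso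
      have hjj := congrFun key j
      rw [Pi.add_apply, Pi.add_apply, sg_ne hji d, sg_same, sg_ne hjk ε] at hjj
      by_cases hj'j : j' = j
      · subst hj'j
        rw [sg_same] at hjj
        have evi := congrFun key i
        rw [Pi.add_apply, Pi.add_apply, sg_same, sg_ne (fun h : i = j' => hji h.symm) c,
          sg_ne hik ε, sg_ne (fun h : i = j' => hji h.symm) c'] at evi
        exact d_ne_zero hp hd (by linear_combination evi)
      · rw [sg_ne (fun h : j = j' => hj'j h.symm) c'] at hjj
        exact d_ne_zero hp hc (by linear_combination hjj)

omit hp2 in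
lemma valcast (a : ZMod p) : ((a.val : ℕ) : ZMod p) = a := by
  haveI : NeZero p := ⟨hp.pos.ne'⟩
  simp [ZMod.natCast_val, ZMod.cast_id']

end Basic

section Auto
variable (hp : p.Prime) (hp2 : 2 < p) (f : Equiv.Perm (Fin n → ZMod p))
  (hf : ∀ u v : Fin n → ZMod p, f u - f v ∈ S p n ↔ u - v ∈ S p n)
include hp hp2 hf

omit hp hp2 in
lemma stepS (u : Fin n → ZMod p) {x : Fin n → ZMod p} (hx : x ∈ S p n) :
    f (u + x) - f u ∈ S p n := by
  rw [hf]; simpa using hx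

lemma oppStep (u : Fin n → ZMod p) {s : Fin n → ZMod p} (hs : s ∈ S p n) :
    f (u - s) - f u = -(f (u + s) - f u) := by
  have hgS : f (u + s) - f u ∈ S p n := stepS f hf u hs
  have hhS : f (u - s) - f u ∈ S p n := by
    rw [hf]
    have h1 : u - s - u = -s := by ring
    rw [h1]; exact neg_mem_S hs
  by_contra hne
  have hw1 : f (f.symm (f u + (f (u+s) - f u) + (f (u-s) - f u)))
      = f u + (f (u+s) - f u) + (f (u-s) - f u) := f.apply_symm_apply _
  have h1 : f.symm (f u + (f (u+s) - f u) + (f (u-s) - f u)) - (u + s) ∈ S p n := by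
    rw [← hf, hw1]
    have h2 : f u + (f (u+s) - f u) + (f (u-s) - f u) - f (u + s) = f (u-s) - f u := by ring
    rw [h2]; exact hhS
  have h2 : f.symm (f u + (f (u+s) - f u) + (f (u-s) - f u)) - (u - s) ∈ S p n := by
    rw [← hf, hw1]
    have h3 : f u + (f (u+s) - f u) + (f (u-s) - f u) - f (u - s) = f (u+s) - f u := by ring
    rw [h3]; exact hgS
  have hu := uniqueCN hp hp2 hs h1 h2
  have hz : f u + (f (u+s) - f u) + (f (u-s) - f u) = f u :=
    (f.apply_symm_apply _).symm.trans (congrArg f hu)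
  exact hne (by linear_combination hz)

lemma transport (u : Fin n → ZMod p) (i : Fin n) {t : Fin n → ZMod p} (ht : t ∈ S p n) :
    f (u + t + Pi.single i 1) - f (u + t) = f (u + Pi.single i 1) - f u := by
  haveI := Fact.mk hp
  obtain ⟨k, ε, hε, rfl⟩ := ht
  by_cases hki : k = i
  · subst hki
    have heS : (Pi.single k 1 : Fin n → ZMod p) ∈ S p n := ⟨k, 1, Or.inl rfl, rfl⟩
    rcases hε with rfl | rfl
    · have hLB := oppStep hp hp2 f hf (u + Pi.single k 1) heS
      have hsimp : u + Pi.single k 1 - Pi.single k 1 = u := by ring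
      rw [hsimp] at hLB
      linear_combination hLB
    · have hLB := oppStep hp hp2 f hf u heS
      have h1 : u + Pi.single k (-1 : ZMod p) = u - Pi.single k 1 := by rw [sg_neg]; ring
      have h2 : u + Pi.single k (-1 : ZMod p) + Pi.single k 1 = u := by rw [sg_neg]; ring
      rw [h2, h1]
      linear_combination -hLB
  · have heS : (Pi.single i 1 : Fin n → ZMod p) ∈ S p n := ⟨i, 1, Or.inl rfl, rfl⟩
    have htS : (Pi.single k ε : Fin n → ZMod p) ∈ S p n := ⟨k, ε, hε, rfl⟩
    have hgS : f (u + Pi.single i 1) - f u ∈ S p n := stepS f hf u heS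
    have hhS : f (u + Pi.single k ε) - f u ∈ S p n := stepS f hf u htS
    have hik : i ≠ k := fun h => hki h.symm
    have hte0 : (Pi.single k ε : Fin n → ZMod p) + Pi.single i 1 ≠ 0 := by
      intro h0
      have := congrFun h0 i
      rw [Pi.add_apply, sg_ne hik ε, sg_same] at this
      simpa using this
    have hneg : f (u + Pi.single k ε) - f u ≠ -(f (u + Pi.single i 1) - f u) := by
      intro hE
      have h1 : f.symm (f (u + Pi.single i 1 + Pi.single k ε))
          = u + Pi.single i 1 + Pi.single k ε := f.symm_apply_apply _
      have hm1 : f (u + Pi.single i 1 + Pi.single k ε)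
          - (f u + (f (u + Pi.single i 1) - f u)) ∈ S p n := by
        have he : f u + (f (u + Pi.single i 1) - f u) = f (u + Pi.single i 1) := by ring
        rw [he, hf]
        have : u + Pi.single i 1 + Pi.single k ε - (u + Pi.single i 1) = Pi.single k ε := by
          ring
        rw [this]; exact htS
      have hm2 : f (u + Pi.single i 1 + Pi.single k ε)
          - (f u - (f (u + Pi.single i 1) - f u)) ∈ S p n := by
        have he : f u - (f (u + Pi.single i 1) - f u) = f (u + Pi.single k ε) := by
          linear_combination -hE
        rw [he, hf]
        have : u + Pi.single i 1 + Pi.single k ε - (u + Pi.single k ε) = Pi.single i 1 := by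
          ring
        rw [this]; exact heS
      have hu2 := uniqueCN hp hp2 hgS hm1 hm2
      have : u + Pi.single i 1 + Pi.single k ε = u := f.injective hu2
      have h00 : (Pi.single k ε : Fin n → ZMod p) + Pi.single i 1 = 0 := by
        linear_combination this
      exact hte0 h00
    have hne1 : f (u + Pi.single i 1) - f u ≠ f (u + Pi.single k ε) - f u := by
      intro hE
      have h1 : f (u + Pi.single i 1) = f (u + Pi.single k ε) := by linear_combination hE
      have h2 : u + Pi.single i 1 = u + Pi.single k ε := f.injective h1
      have h3 : (Pi.single i 1 : Fin n → ZMod p) = Pi.single k ε := by linear_combination h2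
      have := congrFun h3 i
      rw [sg_same, sg_ne hik ε] at this
      simpa using this
    obtain ⟨j, c, hc, hgj⟩ := hgS
    obtain ⟨j', c', hc', hhj⟩ := hhS
    have hjj' : j ≠ j' := by
      intro hE
      subst hE
      rcases hc with rfl | rfl <;> rcases hc' with rfl | rfl
      · exact hne1 (hgj.trans hhj.symm)
      · refine hneg ?_
        rw [hhj, hgj, ← sg_neg]
      · refine hneg ?_
        rw [hhj, hgj]
        have : (Pi.single j (1:ZMod p) : Fin n → ZMod p) = -Pi.single j (-1 : ZMod p) := by
          rw [← sg_neg]; norm_num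
        rw [← this]
      · exact hne1 (hgj.trans hhj.symm)
    have h1 : f (u + Pi.single k ε + Pi.single i 1) - (f u + Pi.single j c) ∈ S p n := by
      rw [← hgj]
      have he : f u + (f (u + Pi.single i 1) - f u) = f (u + Pi.single i 1) := by ring
      rw [he, hf]
      have : u + Pi.single k ε + Pi.single i 1 - (u + Pi.single i 1) = Pi.single k ε := by ring
      rw [this]; exact htS
    have h2 : f (u + Pi.single k ε + Pi.single i 1) - (f u + Pi.single j' c') ∈ S p n := by
      rw [← hhj]
      have he : f u + (f (u + Pi.single k ε) - f u) = f (u + Pi.single k ε) := by ring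
      rw [he, hf]
      have : u + Pi.single k ε + Pi.single i 1 - (u + Pi.single k ε) = Pi.single i 1 := by ring
      rw [this]; exact heS
    rcases twoCN hp hp2 hc hc' hjj' h1 h2 with hz | hz
    · exfalso
      have : u + Pi.single k ε + Pi.single i 1 = u := f.injective (by rw [hz])
      exact hte0 (by linear_combination this)
    · linear_combination hz - hhj - hgj

lemma dirConst (v u : Fin n → ZMod p) (i : Fin n) :
    f (u + v + Pi.single i 1) - f (u + v) = f (u + Pi.single i 1) - f u := by
  haveI : NeZero p := ⟨hp.pos.ne'⟩
  let K : AddSubgroup (Fin n → ZMod p) :=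
    { carrier := {x | ∀ w j, f (w + x + Pi.single j 1) - f (w + x) = f (w + Pi.single j 1) - f w}
      zero_mem' := fun w j => by rw [add_zero]
      add_mem' := by
        intro x y hx hy
        intro w j
        rw [← add_assoc]
        exact (hy (w + x) j).trans (hx w j)
      neg_mem' := by
        intro x hx w j
        have h := hx (w + -x) j
        rw [show w + -x + x = w from by ring] at h
        exact h.symm }
  have hvK : ∀ x : ZMod p, ∀ m : Fin n, (Pi.single m x : Fin n → ZMod p) ∈ K := by
    intro x m
    have hx : (Pi.single m x : Fin n → ZMod p) = x.val • Pi.single m 1 := by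
      rw [← sg_nsmul, mul_one, valcast hp]
    rw [hx]
    have h1 : (Pi.single m 1 : Fin n → ZMod p) ∈ K :=
      fun w j => transport hp hp2 f hf w j ⟨m, 1, Or.inl rfl, rfl⟩
    exact AddSubgroup.nsmul_mem K h1 _
  have hall : v ∈ K := by
    have hv : v = ∑ m, (Pi.single m (v m) : Fin n → ZMod p) := (Finset.univ_sum_single v).symm
    rw [hv]
    exact AddSubgroup.sum_mem K (fun m _ => hvK (v m) m)
  exact hall u i

lemma affine :
    ∃ (j : Fin n → Fin n) (δ : Fin n → ZMod p), Function.Injective j ∧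
      (∀ i, δ i = 1 ∨ δ i = -1) ∧
      ∀ v, f v = f 0 + ∑ i, v i • (Pi.single (j i) (δ i) : Fin n → ZMod p) := by
  haveI := Fact.mk hp
  have hstep0 : ∀ i : Fin n, ∃ (a : Fin n) (d : ZMod p), (d = 1 ∨ d = -1) ∧
      ∀ u, f (u + Pi.single i 1) - f u = Pi.single a d := by
    intro i
    obtain ⟨a, d, hd, hsd⟩ :=
      stepS f hf 0 (⟨i, 1, Or.inl rfl, rfl⟩ : (Pi.single i 1 : Fin n → ZMod p) ∈ S p n)
    refine ⟨a, d, hd, fun u => ?_⟩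
    have h := dirConst hp hp2 f hf u 0 i
    rw [zero_add, zero_add] at h
    rw [zero_add] at hsd
    rw [h, hsd]
  choose j δ hδ hstep using hstep0
  have hstep' : ∀ (u : Fin n → ZMod p) (i : Fin n),
      f (u + Pi.single i 1) = f u + Pi.single (j i) (δ i) := by
    intro u i; have h := hstep i u; linear_combination h
  have hiter : ∀ (m : ℕ) (u : Fin n → ZMod p) (i : Fin n),
      f (u + Pi.single i (m : ZMod p)) = f u + (m : ZMod p) • (Pi.single (j i) (δ i) : Fin n → ZMod p) := by
    intro m
    induction m with
    | zero => intro u i; simp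
    | succ m ih =>
      intro u i
      have hsplit : u + Pi.single i ((m+1 : ℕ) : ZMod p)
          = (u + Pi.single i (m : ZMod p)) + Pi.single i 1 := by
        push_cast
        rw [sg_add]
        ring
      rw [hsplit, hstep', ih]
      push_cast
      rw [add_smul, one_smul]
      abel
  have hsingle : ∀ (u : Fin n → ZMod p) (i : Fin n) (c : ZMod p),
      f (u + Pi.single i c) = f u + c • (Pi.single (j i) (δ i) : Fin n → ZMod p) := by
    intro u i c
    have h := hiter c.val u i
    rwa [valcast hp] at h
  have hsum : ∀ (t : Finset (Fin n)) (u v : Fin n → ZMod p),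
      f (u + ∑ i ∈ t, Pi.single i (v i))
        = f u + ∑ i ∈ t, v i • (Pi.single (j i) (δ i) : Fin n → ZMod p) := by
    intro t
    induction t using Finset.induction_on with
    | empty => intro u v; simp
    | insert _ _ ha ih =>
      intro u v
      rw [Finset.sum_insert ha, Finset.sum_insert ha, ← add_assoc, ih, hsingle, add_assoc]
  have hinj : Function.Injective j := by
    intro i i' hii'
    by_contra hne
    have hii : i ≠ i' := hne
    have conc : ∀ h0 : (0 : Fin n → ZMod p) + Pi.single i 1 + Pi.single i' 1 = 0, False := by
      intro h0
      have hev := congrFun h0 i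
      rw [Pi.add_apply, Pi.add_apply, Pi.zero_apply, sg_same, sg_ne hii 1] at hev
      simp at hev
    have hmix : δ i = -δ i' → False := by
      intro hdd
      have key : f ((0 : Fin n → ZMod p) + Pi.single i 1 + Pi.single i' 1) = f 0 := by
        rw [hsingle ((0 : Fin n → ZMod p) + Pi.single i 1) i' 1, hsingle 0 i 1,
          one_smul, one_smul, hii', hdd, add_assoc, ← sg_add]
        simp
      exact conc (f.injective key)
    have heq : δ i = δ i' → False := by
      intro hdd
      have key : f ((0 : Fin n → ZMod p) + Pi.single i 1) = f (0 + Pi.single i' 1) := by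
        rw [hsingle, hsingle, hii', hdd]
      have h2 : (Pi.single i 1 : Fin n → ZMod p) = Pi.single i' 1 := by
        have h3 := f.injective key
        linear_combination h3
      have hev := congrFun h2 i
      rw [sg_same, sg_ne hii 1] at hev
      simp at hev
    rcases hδ i with hdi | hdi <;> rcases hδ i' with hdi' | hdi'
    · exact heq (hdi.trans hdi'.symm)
    · exact hmix (by rw [hdi, hdi']; try norm_num)
    · exact hmix (by rw [hdi, hdi']; try norm_num)
    · exact heq (hdi.trans hdi'.symm)
  refine ⟨j, δ, hinj, hδ, fun v => ?_⟩
  have h := hsum Finset.univ 0 v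
  rw [zero_add, Finset.univ_sum_single] at h
  exact h

end Auto

section Sums
variable [NeZero p] (hp : p.Prime) (hp2 : 2 < p)
include hp hp2

lemma sum_pow_card_sub_one : (∑ x : ZMod p, x ^ (p - 1)) = -1 := by
  haveI := Fact.mk hp
  have h1 : ∀ x : ZMod p, x ^ (p-1) = if x = 0 then 0 else 1 := by
    intro x
    split
    · rename_i h; rw [h, zero_pow (by omega : p - 1 ≠ 0)]
    · exact ZMod.pow_card_sub_one_eq_one (by assumption)
  rw [Finset.sum_congr rfl (fun x _ => h1 x)]
  have h2 : ∀ x : ZMod p, (if x = 0 then (0:ZMod p) else 1)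
      = 1 - if x = 0 then (1:ZMod p) else 0 := by
    intro x; split <;> simp
  rw [Finset.sum_congr rfl (fun x _ => h2 x), Finset.sum_sub_distrib,
    Finset.sum_ite_eq' Finset.univ (0 : ZMod p) (fun _ => (1:ZMod p)),
    Finset.sum_const, Finset.card_univ, ZMod.card]
  simp

lemma inner_sum (b w : ZMod p) (hw : w ≠ 0) :
    (∑ s : ZMod p, (b + s * w) ^ (p - 1)) = -1 := by
  haveI := Fact.mk hp
  have hbij : Function.Bijective (fun s : ZMod p => b + s * w) := by
    constructor
    · intro s t h
      exact mul_right_cancel₀ hw (by linear_combination h)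
    · intro y
      exact ⟨(y - b) / w, by field_simp; ring⟩
  exact (Fintype.sum_bijective _ hbij
    (fun s : ZMod p => (b + s * w) ^ (p-1)) (fun x : ZMod p => x ^ (p-1)) (fun x => rfl)).trans
    (sum_pow_card_sub_one hp hp2)

lemma phi_inv (j' : Fin n → Fin n) (hj' : Function.Injective j') (δ' : Fin n → ZMod p)
    (hδ' : ∀ i, δ' i = 1 ∨ δ' i = -1) (b : Fin n → ZMod p) :
    (∑ k, ((∑ i, b i • (Pi.single (j' i) (δ' i) : Fin n → ZMod p)) k) ^ (p - 1))
      = ∑ k, (b k) ^ (p - 1) := by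
  haveI := Fact.mk hp
  have hbij : Function.Bijective j' := Finite.injective_iff_bijective.mp hj'
  have hre : (∑ k, ((∑ i', b i' • (Pi.single (j' i') (δ' i') : Fin n → ZMod p)) k) ^ (p-1))
      = ∑ i, ((∑ i', b i' • (Pi.single (j' i') (δ' i') : Fin n → ZMod p)) (j' i)) ^ (p-1) :=
    (Fintype.sum_bijective j' hbij _ _ (fun x => rfl)).symm
  rw [hre]
  apply Finset.sum_congr rfl
  intro i _
  have hev : (∑ i', b i' • (Pi.single (j' i') (δ' i') : Fin n → ZMod p)) (j' i)
      = b i * δ' i := by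
    rw [Finset.sum_apply]
    rw [Finset.sum_eq_single i]
    · rw [Pi.smul_apply, sg_same, smul_eq_mul]
    · intro m _ hm
      rw [Pi.smul_apply, sg_ne (fun h => hm (hj' h.symm)) (δ' m), smul_eq_mul, mul_zero]
    · intro h; exact absurd (Finset.mem_univ i) h
  rw [hev, mul_pow]
  have heven : Even (p - 1) := Nat.Odd.sub_odd (hp.odd_of_ne_two (by omega)) odd_one
  rcases hδ' i with h | h
  · rw [h, one_pow, mul_one]
  · rw [h, heven.neg_one_pow, mul_one]

end Sums
end Stmt16

open Stmt16 in
/-- Let `p > 2` be a prime and `n ≥ 1`, and let `G` be the `n`-fold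
cartesian product of `p`-cycles: the graph on `(ℤ/pℤ)ⁿ` in which `u` and `v` are
adjacent iff there is an index `i` with `v i - u i ∈ {1, -1}` and `u j = v j` for all
`j ≠ i`.  Then every abelian group `Ω` of adjacency-preserving permutations of the
vertex set that acts transitively on the vertices and has cardinality `pⁿ` is
isomorphic as a group to `(ℤ/pℤ)ⁿ`; hence the cartesian product of `n` `p`-cycles has
dimension `n`. -/
theorem stmt_16 (p n : ℕ) (hp : p.Prime) (hp2 : 2 < p) (hn : 1 ≤ n)
    (Adj : (Fin n → ZMod p) → (Fin n → ZMod p) → Prop)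
    (hAdj : ∀ u v, Adj u v ↔
      ∃ i, (v i - u i = 1 ∨ v i - u i = -1) ∧ ∀ j ≠ i, u j = v j)
    (Ω : Subgroup (Equiv.Perm (Fin n → ZMod p)))
    (hcomm : ∀ σ ∈ Ω, ∀ τ ∈ Ω, σ * τ = τ * σ)
    (haut : ∀ σ ∈ Ω, ∀ u v, Adj (σ u) (σ v) ↔ Adj u v)
    (htrans : ∀ u v : Fin n → ZMod p, ∃ σ ∈ Ω, σ u = v)
    (hcard : Nat.card Ω = p ^ n) :
    Nonempty (Ω ≃* Multiplicative (Fin n → ZMod p)) := by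
  classical
  haveI := Fact.mk hp
  haveI : NeZero p := ⟨hp.pos.ne'⟩
  -- adjacency in difference form
  have hadjS : ∀ u v : Fin n → ZMod p, Adj u v ↔ v - u ∈ Stmt16.S p n := by
    intro u v
    rw [hAdj]
    constructor
    · rintro ⟨i, hd, hoth⟩
      refine ⟨i, v i - u i, hd, funext fun m => ?_⟩
      rw [sg_apply]
      by_cases hmi : m = i
      · rw [if_pos hmi, hmi]; rfl
      · rw [if_neg hmi]
        have := hoth m hmi
        show v m - u m = 0
        rw [this]; ring
    · rintro ⟨i, d, hd, hvd⟩
      have hv : ∀ m, v m - u m = (Pi.single i d : Fin n → ZMod p) m := by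
        intro m; rw [← hvd]; rfl
      refine ⟨i, ?_, ?_⟩
      · have h := hv i; rw [sg_same] at h; rw [h]; exact hd
      · intro m hmi
        have h := hv m
        rw [sg_ne hmi d] at h
        linear_combination -h
  -- automorphism property in difference form
  have hfS : ∀ σ, σ ∈ Ω → ∀ u v : Fin n → ZMod p,
      σ u - σ v ∈ Stmt16.S p n ↔ u - v ∈ Stmt16.S p n := by
    intro σ hσ u v
    have h := haut σ hσ v u
    rw [hadjS, hadjS] at h
    exact h
  have haff : ∀ σ, σ ∈ Ω → ∃ (j : Fin n → Fin n) (δ : Fin n → ZMod p),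
      Function.Injective j ∧ (∀ i, δ i = 1 ∨ δ i = -1) ∧
      ∀ v, σ v = σ 0 + ∑ i, v i • (Pi.single (j i) (δ i) : Fin n → ZMod p) :=
    fun σ hσ => Stmt16.affine hp hp2 σ (hfS σ hσ)
  -- every element of Ω is a translation
  have htransl : ∀ σ, σ ∈ Ω → ∀ v : Fin n → ZMod p, σ v = v + σ 0 := by
    intro σ hσ
    obtain ⟨j, δ, hjinj, hδ, hform⟩ := haff σ hσ
    have hkey : ∀ i, j i = i ∧ δ i = 1 := by
      intro i0
      by_contra hbad
      set w : Fin n → ZMod p := Pi.single (j i0) (δ i0) - Pi.single i0 1 with hw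
      set b : Fin n → ZMod p := σ 0 with hb
      have hC : ∀ s : ZMod p, (∑ k, ((b + s • w) k) ^ (p-1)) = ∑ k, (b k)^(p-1) := by
        intro s
        obtain ⟨τ, hτ, hτ0⟩ := htrans 0 (s • (Pi.single i0 1 : Fin n → ZMod p))
        obtain ⟨j', δ', hj'inj, hδ', hform'⟩ := haff τ hτ
        have hcm := hcomm σ hσ τ hτ
        have hc0 : σ (τ 0) = τ (σ 0) := by
          have h1 : (σ * τ) 0 = (τ * σ) 0 := by rw [hcm]
          simpa [Equiv.Perm.mul_apply] using h1
        have hστ0 : σ (τ 0) = b + s • (Pi.single (j i0) (δ i0) : Fin n → ZMod p) := by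
          rw [hτ0, hform]
          congr 1
          rw [Finset.sum_eq_single i0]
          · simp [sg_same, smul_smul]
          · intro m _ hm
            simp [sg_ne hm]
          · intro h; exact absurd (Finset.mem_univ i0) h
        have hτb : τ b - τ 0
            = ∑ i, b i • (Pi.single (j' i) (δ' i) : Fin n → ZMod p) := by
          rw [hform' b]; ring
        have hAb : (∑ i, b i • (Pi.single (j' i) (δ' i) : Fin n → ZMod p)) = b + s • w := by
          rw [← hτb, ← hc0, hστ0, hτ0, hw, smul_sub]
          ring
        calc (∑ k, ((b + s • w) k) ^ (p-1))
            = ∑ k, ((∑ i, b i • (Pi.single (j' i) (δ' i) : Fin n → ZMod p)) k)^(p-1) := by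
              rw [hAb]
          _ = ∑ k, (b k)^(p-1) := Stmt16.phi_inv hp hp2 j' hj'inj δ' hδ' b
      have hterm : ∀ k : Fin n, (∑ s : ZMod p, (b k + s * w k)^(p-1))
          = (if w k = 0 then (0:ZMod p) else -1) := by
        intro k
        by_cases hwk : w k = 0
        · rw [if_pos hwk]
          rw [Finset.sum_congr rfl
              (fun s (_ : s ∈ Finset.univ) => by rw [hwk, mul_zero, add_zero]),
            Finset.sum_const, Finset.card_univ, ZMod.card, nsmul_eq_mul,
            ZMod.natCast_self, zero_mul]
        · rw [if_neg hwk]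
          exact Stmt16.inner_sum hp hp2 (b k) (w k) hwk
      have hD : ∑ k, (if w k = 0 then (0:ZMod p) else -1) = 0 := by
        have hL : ∑ s : ZMod p, (∑ k, ((b + s • w) k)^(p-1)) = 0 := by
          rw [Finset.sum_congr rfl (fun s _ => hC s), Finset.sum_const, Finset.card_univ,
            ZMod.card, nsmul_eq_mul, ZMod.natCast_self, zero_mul]
        rw [Finset.sum_comm] at hL
        calc ∑ k, (if w k = 0 then (0:ZMod p) else -1)
            = ∑ k, ∑ s : ZMod p, (b k + s * w k)^(p-1) :=
              (Finset.sum_congr rfl (fun k _ => hterm k)).symm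
          _ = ∑ k, ∑ s : ZMod p, ((b + s • w) k)^(p-1) := by
              apply Finset.sum_congr rfl
              intro k _
              apply Finset.sum_congr rfl
              intro s _
              rw [Pi.add_apply, Pi.smul_apply, smul_eq_mul]
          _ = 0 := hL
      by_cases hji : j i0 = i0
      · have hδi : δ i0 = -1 := by
          rcases hδ i0 with h | h
          · exact absurd ⟨hji, h⟩ hbad
          · exact h
        have hwk : ∀ k, w k = if k = i0 then (-2 : ZMod p) else 0 := by
          intro k
          rw [hw, Pi.sub_apply, sg_apply, sg_apply, hji, hδi]
          split <;> norm_num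
        have hm2 : (-2 : ZMod p) ≠ 0 := by
          intro h
          exact Stmt16.two_ne hp2 (by linear_combination -h)
        have hsum1 : ∑ k, (if w k = 0 then (0:ZMod p) else -1)
            = ∑ k, (if k = i0 then (-1 : ZMod p) else 0) := by
          apply Finset.sum_congr rfl
          intro k _
          rw [hwk k]
          by_cases hk : k = i0
          · rw [if_pos hk, if_pos hk, if_neg hm2]
          · rw [if_neg hk, if_neg hk, if_pos rfl]
        rw [hsum1, Finset.sum_ite_eq' Finset.univ i0 (fun _ => (-1 : ZMod p)),
          if_pos (Finset.mem_univ i0)] at hD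
        exact one_ne_zero (α := ZMod p) (by linear_combination -hD)
      · have hδ0 : δ i0 ≠ 0 := Stmt16.d_ne_zero hp (hδ i0)
        have hwi0 : w i0 = -1 := by
          rw [hw, Pi.sub_apply, sg_ne (fun h : i0 = j i0 => hji h.symm) (δ i0), sg_same]
          ring
        have hwji0 : w (j i0) = δ i0 := by
          rw [hw, Pi.sub_apply, sg_same, sg_ne hji 1]
          ring
        have hm1 : (-1 : ZMod p) ≠ 0 := neg_ne_zero.mpr one_ne_zero
        have hsub : ∑ k, (if w k = 0 then (0:ZMod p) else -1)
            = ∑ k ∈ ({i0, j i0} : Finset (Fin n)), (if w k = 0 then (0:ZMod p) else -1) := by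
          symm
          apply Finset.sum_subset (Finset.subset_univ _)
          intro k _ hk
          simp only [Finset.mem_insert, Finset.mem_singleton] at hk
          push_neg at hk
          have hwk : w k = 0 := by
            rw [hw, Pi.sub_apply, sg_ne hk.2 (δ i0), sg_ne hk.1 1]
            ring
          rw [if_pos hwk]
        rw [hsub, Finset.sum_pair (fun h : i0 = j i0 => hji h.symm)] at hD
        rw [hwi0, hwji0, if_neg hm1, if_neg hδ0] at hD
        exact Stmt16.two_ne hp2 (by linear_combination -hD)
    intro v
    rw [hform v]
    have hid : ∑ i, v i • (Pi.single (j i) (δ i) : Fin n → ZMod p) = v := by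
      have h1 : ∀ i : Fin n, v i • (Pi.single (j i) (δ i) : Fin n → ZMod p)
          = Pi.single i (v i) := by
        intro i
        rw [(hkey i).1, (hkey i).2, ← sg_smul, mul_one]
      rw [Finset.sum_congr rfl (fun i _ => h1 i), Finset.univ_sum_single]
    rw [hid, add_comm]
  -- build the isomorphism
  let F : Ω →* Multiplicative (Fin n → ZMod p) :=
    { toFun := fun σ => Multiplicative.ofAdd ((σ : Equiv.Perm (Fin n → ZMod p)) 0)
      map_one' := rfl
      map_mul' := by
        intro σ τ
        show Multiplicative.ofAdd ((σ : Equiv.Perm (Fin n → ZMod p))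
            ((τ : Equiv.Perm (Fin n → ZMod p)) 0)) = _
        rw [htransl σ σ.2 ((τ : Equiv.Perm (Fin n → ZMod p)) 0)]
        rw [add_comm]
        rfl }
  have hFinj : Function.Injective F := by
    intro σ τ h
    have h0 : (σ : Equiv.Perm (Fin n → ZMod p)) 0 = (τ : Equiv.Perm (Fin n → ZMod p)) 0 := h
    apply Subtype.ext
    apply Equiv.ext
    intro v
    rw [htransl σ σ.2 v, htransl τ τ.2 v, h0]
  have hFsurj : Function.Surjective F := by
    intro x
    obtain ⟨σ, hσ, hσ0⟩ := htrans 0 (Multiplicative.toAdd x)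
    exact ⟨⟨σ, hσ⟩, by show Multiplicative.ofAdd (σ 0) = x; rw [hσ0, ofAdd_toAdd]⟩
  exact ⟨MulEquiv.ofBijective F ⟨hFinj, hFsurj⟩⟩
end

section
/- Let p ≥ 3 be an integer, let k ≥ 1 and n ≥ 1 be integers, and let r₁, …, r_k be nonnegative integers such that r₁ + ⋯ + r_k ≥ n and p^{r₁} + ⋯ + p^{r_k} = n·p. Then r_h = 1 for every h = 1, …, k (and consequently k = n). In particular this uses that for p ≥ 3 and a nonnegative integer r, p·r < p^r whenever r ≠ 1, with equality p·r = p^r when r = 1. -/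
lemma aux_le (p : ℕ) (hp : 3 ≤ p) (r : ℕ) : p * r ≤ p ^ r := by
  cases r with
  | zero => simp
  | succ m =>
    have h1 : m + 1 ≤ p ^ m := by
      have := Nat.lt_two_pow_self (n := m)
      have := Nat.pow_le_pow_left (show 2 ≤ p by omega) m
      omega
    calc p * (m + 1) ≤ p * p ^ m := Nat.mul_le_mul_left p h1
      _ = p ^ (m + 1) := (pow_succ' p m).symm

lemma aux_lt (p : ℕ) (hp : 3 ≤ p) (r : ℕ) (hr : r ≠ 1) : p * r < p ^ r := by
  match r, hr with
  | 0, _ => simp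
  | (m+2), _ =>
    have h1 : m + 3 ≤ 2 ^ (m+2) := by
      have h0 := Nat.lt_two_pow_self (n := m+1)
      have h1 : (2:ℕ) ^ (m+2) = 4 * 2 ^ m := by ring
      omega
    have h2 : 2 ^ (m+2) < p ^ (m+2) := Nat.pow_lt_pow_left (by omega) (by omega)
    calc p * (m + 2) < p * (m + 3) := by nlinarith
      _ ≤ p * p ^ (m+1) := by
          have : m + 3 ≤ p ^ (m+1) := by
            have h3 := Nat.lt_two_pow_self (n := m+1)
            have h4 : 2 ^ (m+1) < p ^ (m+1) := Nat.pow_lt_pow_left (by omega) (by omega)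
            omega
          exact Nat.mul_le_mul_left p this
      _ = p ^ (m + 2) := (pow_succ' p (m+1)).symm

/-- Let `p ≥ 3`, `k ≥ 1`, `n ≥ 1`, and let `r₁, …, r_k` be
nonnegative integers such that `r₁ + ⋯ + r_k ≥ n` and `p^{r₁} + ⋯ + p^{r_k} = n·p`.
Then `r_h = 1` for every `h`, and consequently `k = n`.  (This is the counting
argument used in the proof that the cartesian product of `n` circulants on `p`
vertices, `p` an odd prime, has dimension `n`.) -/
theorem stmt_17 (p k n : ℕ) (hp : 3 ≤ p) (hk : 1 ≤ k) (hn : 1 ≤ n)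
    (r : Fin k → ℕ) (h1 : n ≤ ∑ h, r h) (h2 : ∑ h, p ^ r h = n * p) :
    (∀ h, r h = 1) ∧ k = n := by
  have hsum_le : ∑ h, p * r h ≤ ∑ h, p ^ r h :=
    Finset.sum_le_sum fun i _ => aux_le p hp (r i)
  have hnp : n * p ≤ ∑ h, p * r h := by
    rw [← Finset.mul_sum]
    calc n * p = p * n := Nat.mul_comm n p
      _ ≤ p * ∑ h, r h := Nat.mul_le_mul_left p h1
  have hall : ∀ h, r h = 1 := by
    intro i
    by_contra hne
    have hstrict : ∑ h, p * r h < ∑ h, p ^ r h := by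
      apply Finset.sum_lt_sum (fun j _ => aux_le p hp (r j))
      exact ⟨i, Finset.mem_univ i, aux_lt p hp (r i) hne⟩
    omega
  refine ⟨hall, ?_⟩
  have : ∑ h, p ^ r h = k * p := by
    rw [Finset.sum_congr rfl (fun i _ => by rw [hall i, pow_one])]
    simp [Finset.sum_const, Finset.card_univ]
  rw [this] at h2
  have : p ≠ 0 := by omega
  exact Nat.eq_of_mul_eq_mul_right (by omega) h2
end

section
/- Let p be a prime and let D be a digraph on a vertex set V with exactly p vertices whose automorphism group acts transitively on V (i.e., for any two vertices u, v there is an adjacency-preserving permutation of V sending u to v). Then D is isomorphic to a circulant digraph: there exist a set A ⊆ ℤ/pℤ and a bijection e : V → ℤ/pℤ such that for all u, v ∈ V, there is an arc from u to v in D if and only if e(v) − e(u) ∈ A. -/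
/-- Turner's theorem for digraphs.  Let `p` be a prime and let `D`
be a digraph on a vertex set `V` with exactly `p` vertices whose automorphism group
acts transitively on `V`.  Then `D` is isomorphic to a circulant digraph: there exist
a set `A ⊆ ℤ/pℤ` and a bijection `e : V → ℤ/pℤ` such that for all `u, v ∈ V` there is
an arc from `u` to `v` in `D` iff `e v - e u ∈ A`. -/
theorem stmt_18 (p : ℕ) (hp : p.Prime) (V : Type*) [Fintype V]
    (hV : Fintype.card V = p) (Arc : V → V → Prop)
    (htrans : ∀ u v : V, ∃ σ : Equiv.Perm V,
      (∀ x y : V, Arc (σ x) (σ y) ↔ Arc x y) ∧ σ u = v) :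
    ∃ (A : Set (ZMod p)) (e : V ≃ ZMod p),
      ∀ u v : V, Arc u v ↔ e v - e u ∈ A := by
  classical
  haveI : Fact p.Prime := ⟨hp⟩
  -- the automorphism group
  set G : Subgroup (Equiv.Perm V) :=
    { carrier := {σ | ∀ x y, Arc (σ x) (σ y) ↔ Arc x y}
      one_mem' := by intro x y; simp
      mul_mem' := by
        intro a b ha hb x y
        simp only [Equiv.Perm.mul_apply]
        exact (ha _ _).trans (hb _ _)
      inv_mem' := by
        intro a ha x y
        have := ha (a⁻¹ x) (a⁻¹ y)
        simpa using this.symm } with hGdef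
  haveI : MulAction.IsPretransitive G V := by
    constructor
    intro u v
    obtain ⟨σ, hσ, huv⟩ := htrans u v
    exact ⟨⟨σ, hσ⟩, huv⟩
  obtain ⟨w⟩ : Nonempty V := by
    rw [← Fintype.card_pos_iff, hV]; exact hp.pos
  have horb : MulAction.orbit G w = Set.univ := MulAction.orbit_eq_univ G w
  have hdvd : p ∣ Fintype.card G := by
    have h := MulAction.card_orbit_mul_card_stabilizer_eq_card_group G w
    have hcard : Fintype.card (MulAction.orbit G w) = p := by
      rw [← hV]
      exact Fintype.card_congr ((Equiv.setCongr horb).trans (Equiv.Set.univ V))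
    rw [hcard] at h
    exact ⟨_, h.symm⟩
  obtain ⟨g, hg⟩ := exists_prime_orderOf_dvd_card p hdvd
  set σ : Equiv.Perm V := (g : Equiv.Perm V) with hσdef
  have hσord : orderOf σ = p := by rw [Subgroup.orderOf_coe]; exact hg
  have hσarc : ∀ x y, Arc (σ x) (σ y) ↔ Arc x y := g.2
  have hσp : σ ^ p = 1 := by rw [← hσord]; exact pow_orderOf_eq_one σ
  have hσne : σ ≠ 1 := by
    intro h
    rw [h, orderOf_one] at hσord
    exact hp.one_lt.ne hσord
  -- a point moved by σ
  obtain ⟨v₀, hv₀⟩ : ∃ v, σ v ≠ v := by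
    by_contra h
    push_neg at h
    exact hσne (Equiv.ext h)
  -- fixed-point lemma
  have hfix : ∀ n : ℕ, (σ ^ n) v₀ = v₀ → p ∣ n := by
    intro n hn
    by_contra hnd
    have hmod : ¬ (p ∣ n % p) := fun h => hnd ((Nat.dvd_mod_iff dvd_rfl).mp h)
    set n' := n % p with hn'
    have hn'fix : (σ ^ n') v₀ = v₀ := by
      rw [hn', ← hσord, pow_mod_orderOf]; exact hn
    have hne : ((n' : ZMod p)) ≠ 0 := by
      intro h
      exact hmod ((ZMod.natCast_eq_zero_iff n' p).mp h)
    set m := ((n' : ZMod p)⁻¹).val with hm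
    have hmul : ((n' * m : ℕ) : ZMod p) = ((1 : ℕ) : ZMod p) := by
      push_cast [hm]
      rw [ZMod.natCast_val, ZMod.cast_id]
      exact mul_inv_cancel₀ hne
    have hmulmod : (n' * m) % p = 1 % p :=
      (ZMod.natCast_eq_natCast_iff _ _ _).mp hmul
    have h1 : (σ ^ (n' * m)) v₀ = v₀ := by
      rw [pow_mul]
      clear_value m
      clear hm hmul hmulmod
      induction m with
      | zero => simp
      | succ k ih =>
        rw [pow_succ, Equiv.Perm.mul_apply, hn'fix]
        exact ih
    have h2 : (σ ^ (n' * m)) v₀ = σ v₀ := by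
      have : σ ^ (n' * m) = σ ^ (1 : ℕ) := by
        rw [← pow_mod_orderOf, hσord, hmulmod, ← hσord, pow_mod_orderOf]
      rw [this, pow_one]
    exact hv₀ (h2.symm.trans h1)
  -- the bijection
  set f : ZMod p → V := fun k => (σ ^ k.val) v₀ with hfdef
  have hfinj : Function.Injective f := by
    intro a b hab
    have hble : b.val ≤ p := (ZMod.val_lt b).le
    have h1 : (σ ^ (p - b.val + a.val)) v₀ = v₀ := by
      rw [pow_add, Equiv.Perm.mul_apply]
      show (σ ^ (p - b.val)) (f a) = v₀
      rw [hab]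
      show (σ ^ (p - b.val)) ((σ ^ b.val) v₀) = v₀
      rw [← Equiv.Perm.mul_apply, ← pow_add, Nat.sub_add_cancel hble, hσp]
      rfl
    have hz : ((p - b.val + a.val : ℕ) : ZMod p) = 0 :=
      (ZMod.natCast_eq_zero_iff _ _).mpr (hfix _ h1)
    push_cast [Nat.cast_sub hble] at hz
    rw [ZMod.natCast_val, ZMod.natCast_val, ZMod.cast_id, ZMod.cast_id,
      ZMod.natCast_self] at hz
    have : a - b = 0 := by linear_combination hz
    exact sub_eq_zero.mp this
  have hfbij : Function.Bijective f :=
    (Fintype.bijective_iff_injective_and_card f).mpr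
      ⟨hfinj, by simp [ZMod.card, hV]⟩
  -- iterated invariance
  have harc : ∀ (n : ℕ) (x y : V), Arc ((σ ^ n) x) ((σ ^ n) y) ↔ Arc x y := by
    intro n
    induction n with
    | zero => intro x y; simp
    | succ k ih =>
      intro x y
      rw [pow_succ]
      simp only [Equiv.Perm.mul_apply]
      exact (ih _ _).trans (hσarc x y)
  have hf0 : f 0 = v₀ := by simp [hfdef]
  have hkey : ∀ a b : ZMod p, Arc (f a) (f b) ↔ Arc (f 0) (f (b - a)) := by
    intro a b
    have hpow : σ ^ (a.val + (b - a).val) = σ ^ b.val := by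
      have h1 : (a + (b - a)).val = (a.val + (b - a).val) % p := ZMod.val_add _ _
      rw [add_sub_cancel] at h1
      rw [← pow_mod_orderOf, hσord, ← h1]
    have hfb : f b = (σ ^ a.val) (f (b - a)) := by
      show f b = (σ ^ a.val) ((σ ^ (b - a).val) v₀)
      rw [← Equiv.Perm.mul_apply, ← pow_add, hpow]
    have hfa : f a = (σ ^ a.val) (f 0) := by
      rw [hf0]
    rw [hfa, hfb]
    exact harc a.val _ _
  refine ⟨{a | Arc v₀ (f a)}, (Equiv.ofBijective f hfbij).symm, ?_⟩
  intro u v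
  set e : V ≃ ZMod p := (Equiv.ofBijective f hfbij).symm with he
  have hu : f (e u) = u := (Equiv.ofBijective f hfbij).apply_symm_apply u
  have hv : f (e v) = v := (Equiv.ofBijective f hfbij).apply_symm_apply v
  calc Arc u v ↔ Arc (f (e u)) (f (e v)) := by rw [hu, hv]
    _ ↔ Arc (f 0) (f (e v - e u)) := hkey _ _
    _ ↔ Arc v₀ (f (e v - e u)) := by rw [hf0]
end
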